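/- Let q(x) = ∃y. φ(x,y) be a rooted CQ, K = ⟨T,A⟩ a DL-Lite_core^bag ontology, z an equality-consistent subset of y, and z' a non-empty ma-connected subset of z that is realisable by T. Then (q^a_{z'})^{C(⟨T,A'⟩)}(⟨⟩) = 1, where a and A' are as in the definition of realisability; that is, the Boolean query q^a_{z'} has exactly one contributing valuation over the corresponding one-assertion canonical model. -/

import Mathlib

/-!
Common formalization of the bag semantics of DL-Lite ontologies
(Nikolaou et al., "The Bag Semantics of Ontology-Based Data Access").
-/

open scoped Classical

noncomputable section

/-- Individuals (constants). -/
abbrev Ind : Type := ℕ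
/-- Variables. -/
abbrev Var : Type := ℕ
/-- Atomic concepts (unary predicates). -/
abbrev AtomicConcept : Type := ℕ
/-- Atomic roles (binary predicates). -/
abbrev AtomicRole : Type := ℕ

/-- A role is an atomic role or its inverse. -/
inductive Role where
  | atomic : AtomicRole → Role
  | inv : AtomicRole → Role
  deriving DecidableEq

/-- A concept is an atomic concept or `∃R` for a role `R`. -/
inductive DLConcept where
  | atomic : AtomicConcept → DLConcept
  | ex : Role → DLConcept
  deriving DecidableEq

/-- TBox axioms: inclusions and disjointness axioms between concepts or roles. -/
inductive TBoxAxiom where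
  | cIncl : DLConcept → DLConcept → TBoxAxiom
  | rIncl : Role → Role → TBoxAxiom
  | cDisj : DLConcept → DLConcept → TBoxAxiom
  | rDisj : Role → Role → TBoxAxiom
  deriving DecidableEq

/-- A DL-Lite_R TBox: a finite set of TBox axioms. -/
abbrev TBox : Type := Finset TBoxAxiom

/-- A DL-Lite_core TBox: only concept inclusions and concept disjointness axioms. -/
def TBox.IsCore (T : TBox) : Prop :=
  ∀ ax ∈ T, (∃ C D, ax = TBoxAxiom.cIncl C D) ∨ (∃ C D, ax = TBoxAxiom.cDisj C D)

/-- ABox assertions. -/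
inductive Assertion where
  | conceptA : AtomicConcept → Ind → Assertion
  | roleA : AtomicRole → Ind → Ind → Assertion
  deriving DecidableEq

/-- A bag ABox: a finite bag of assertions (represented as a multiset). -/
abbrev BagABox : Type := Multiset Assertion

/-- Multiplicity of an assertion in a bag ABox, as an extended natural. -/
def BagABox.mult (A : BagABox) (s : Assertion) : ℕ∞ := (A.count s : ℕ∞)

/-- Sum of an arbitrary family of extended naturals. -/
def bagSum {α : Type*} (f : α → ℕ∞) : ℕ∞ := ⨆ s : Finset α, ∑ x ∈ s, f x

/-- A bag interpretation. -/
structure BagInterp : Type 1 where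
  Δ : Type
  dne : Nonempty Δ
  indMap : Ind → Δ
  indInj : Function.Injective indMap
  cI : AtomicConcept → Δ → ℕ∞
  rI : AtomicRole → Δ → Δ → ℕ∞

/-- Extension of the interpretation function to roles. -/
def BagInterp.roleMult (I : BagInterp) : Role → I.Δ → I.Δ → ℕ∞
  | Role.atomic P => fun u v => I.rI P u v
  | Role.inv P => fun u v => I.rI P v u

/-- Extension of the interpretation function to concepts. -/
def BagInterp.conceptMult (I : BagInterp) : DLConcept → I.Δ → ℕ∞
  | DLConcept.atomic A => fun u => I.cI A u
  | DLConcept.ex R => fun u => bagSum (fun v => I.roleMult R u v)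

/-- Multiplicity of an assertion in a bag interpretation. -/
def BagInterp.assertMult (I : BagInterp) : Assertion → ℕ∞
  | Assertion.conceptA A a => I.cI A (I.indMap a)
  | Assertion.roleA P a b => I.rI P (I.indMap a) (I.indMap b)

/-- Satisfaction of a TBox axiom by a bag interpretation. -/
def BagInterp.SatisfiesAx (I : BagInterp) : TBoxAxiom → Prop
  | TBoxAxiom.cIncl C D => ∀ u, I.conceptMult C u ≤ I.conceptMult D u
  | TBoxAxiom.rIncl R S => ∀ u v, I.roleMult R u v ≤ I.roleMult S u v
  | TBoxAxiom.cDisj C D => ∀ u, min (I.conceptMult C u) (I.conceptMult D u) = 0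
  | TBoxAxiom.rDisj R S => ∀ u v, min (I.roleMult R u v) (I.roleMult S u v) = 0

/-- A DL-Lite^bag ontology. -/
structure Ontology : Type where
  tbox : TBox
  abox : BagABox

/-- `I` is a bag model of the ontology `K`. -/
def BagInterp.IsModel (I : BagInterp) (K : Ontology) : Prop :=
  (∀ ax ∈ K.tbox, I.SatisfiesAx ax) ∧
  ∀ s : Assertion, BagABox.mult K.abox s ≤ I.assertMult s

/-- Satisfiability of an ontology under bag semantics. -/
def Ontology.Satisfiable (K : Ontology) : Prop := ∃ I : BagInterp, I.IsModel K

/- ## Conjunctive queries -/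

/-- Terms: variables or individuals. -/
inductive Term where
  | var : Var → Term
  | ind : Ind → Term
  deriving DecidableEq

def Term.varsOf : Term → List Var
  | Term.var v => [v]
  | Term.ind _ => []

def Term.indsOf : Term → List Ind
  | Term.var _ => []
  | Term.ind a => [a]

/-- Query atoms: concept atoms, role atoms, and equalities. -/
inductive QAtom where
  | conceptAt : AtomicConcept → Term → QAtom
  | roleAt : AtomicRole → Term → Term → QAtom
  | eqAt : Var → Term → QAtom
  deriving DecidableEq

def QAtom.terms : QAtom → List Term
  | QAtom.conceptAt _ t => [t]
  | QAtom.roleAt _ t₁ t₂ => [t₁, t₂]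
  | QAtom.eqAt z t => [Term.var z, t]

def QAtom.vars : QAtom → List Var
  | QAtom.conceptAt _ t => t.varsOf
  | QAtom.roleAt _ t₁ t₂ => t₁.varsOf ++ t₂.varsOf
  | QAtom.eqAt z t => z :: t.varsOf

/-- A conjunctive query `q(x) = ∃y. φ(x,y)`: a tuple of answer variables,
a tuple of existential variables, and a conjunction (list, i.e. allowing
repetitions) of atoms. -/
structure CQ : Type where
  answerVars : List Var
  existVars : List Var
  atoms : List QAtom

def CQ.vars (q : CQ) : List Var := q.answerVars ++ q.existVars

/-- Value of a term under a valuation of the variables. -/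
def termVal (I : BagInterp) (f : Var → I.Δ) : Term → I.Δ
  | Term.var v => f v
  | Term.ind a => I.indMap a

/-- Multiplicity contributed by an atom under a valuation: for predicate atoms the
multiplicity of the image tuple, for equalities the indicator of satisfaction. -/
def QAtom.mult (I : BagInterp) (f : Var → I.Δ) : QAtom → ℕ∞
  | QAtom.conceptAt A t => I.cI A (termVal I f t)
  | QAtom.roleAt P t₁ t₂ => I.rI P (termVal I f t₁) (termVal I f t₂)
  | QAtom.eqAt z t => if f z = termVal I f t then 1 else 0

/-- The bag answers `q^I(ā)`: the sum, over all valuations of the variables of `q`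
mapping the answer variables to `ā` (valuations are normalized to a fixed junk
value outside the variables of `q`), of the product of the multiplicities of the
atom occurrences of `q`. -/
def CQ.bagAnswer (q : CQ) (I : BagInterp) (a : List Ind) : ℕ∞ :=
  bagSum (fun f : {f : Var → I.Δ //
      (∀ v, v ∉ q.vars → f v = I.indMap 0) ∧
      q.answerVars.map f = a.map I.indMap} =>
    (q.atoms.map (QAtom.mult I f.1)).prod)

/-- Bag certain answers: pointwise minimum over all bag models. -/
def bagCertain (K : Ontology) (q : CQ) (a : List Ind) : ℕ∞ :=
  ⨅ (I : BagInterp) (_ : I.IsModel K), q.bagAnswer I a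

/-- Base relation of the equivalence relation generated by the equality atoms. -/
def CQ.eqBase (q : CQ) : Term → Term → Prop := fun t₁ t₂ =>
  ∃ z t, QAtom.eqAt z t ∈ q.atoms ∧ t₁ = Term.var z ∧ t₂ = t

/-- Equivalence of terms generated by the equality atoms of `q`. -/
def CQ.eqRel (q : CQ) : Term → Term → Prop := Relation.EqvGen q.eqBase

/-- Safety: the class of every variable contains a term occurring in a
non-equality atom. -/
def CQ.Safe (q : CQ) : Prop :=
  ∀ v ∈ q.vars, ∃ t : Term, ∃ atm ∈ q.atoms,
    (∀ z s, atm ≠ QAtom.eqAt z s) ∧ t ∈ QAtom.terms atm ∧ q.eqRel (Term.var v) t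

/-- Well-formedness of CQs: repetition-free disjoint tuples of variables, all
variables of the atoms among the declared variables, and safety. -/
def CQ.WellFormed (q : CQ) : Prop :=
  q.answerVars.Nodup ∧ q.existVars.Nodup ∧
  (∀ v ∈ q.answerVars, v ∉ q.existVars) ∧
  (∀ atm ∈ q.atoms, ∀ v ∈ QAtom.vars atm, v ∈ q.vars) ∧
  q.Safe

def CQ.mentionsTerm (q : CQ) (t : Term) : Prop := ∃ atm ∈ q.atoms, t ∈ QAtom.terms atm

/-- Adjacency in the Gaifman graph of `q` (on terms; equality atoms merge the
classes of their two terms, which for connectivity purposes is the same as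
making them adjacent). -/
def CQ.gaifmanAdj (q : CQ) : Term → Term → Prop := fun t₁ t₂ =>
  ∃ atm ∈ q.atoms, t₁ ∈ QAtom.terms atm ∧ t₂ ∈ QAtom.terms atm

/-- A CQ is rooted if every connected component of its Gaifman graph contains
an answer variable or an individual. -/
def CQ.Rooted (q : CQ) : Prop :=
  ∀ t : Term, q.mentionsTerm t →
    ∃ t' : Term, Relation.ReflTransGen q.gaifmanAdj t t' ∧
      ((∃ v ∈ q.answerVars, t' = Term.var v) ∨ ∃ a : Ind, t' = Term.ind a)

/- ## Set semantics -/

/-- A classical (set) interpretation. -/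
structure SetInterp : Type 1 where
  Δ : Type
  dne : Nonempty Δ
  indMap : Ind → Δ
  indInj : Function.Injective indMap
  cI : AtomicConcept → Set Δ
  rI : AtomicRole → Set (Δ × Δ)

def SetInterp.roleSet (I : SetInterp) : Role → Set (I.Δ × I.Δ)
  | Role.atomic P => I.rI P
  | Role.inv P => {p | (p.2, p.1) ∈ I.rI P}

def SetInterp.conceptSet (I : SetInterp) : DLConcept → Set I.Δ
  | DLConcept.atomic A => I.cI A
  | DLConcept.ex R => {u | ∃ v, (u, v) ∈ I.roleSet R}

def SetInterp.SatisfiesAx (I : SetInterp) : TBoxAxiom → Prop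
  | TBoxAxiom.cIncl C D => I.conceptSet C ⊆ I.conceptSet D
  | TBoxAxiom.rIncl R S => I.roleSet R ⊆ I.roleSet S
  | TBoxAxiom.cDisj C D => I.conceptSet C ∩ I.conceptSet D = ∅
  | TBoxAxiom.rDisj R S => I.roleSet R ∩ I.roleSet S = ∅

def SetInterp.SatisfiesAssertion (I : SetInterp) : Assertion → Prop
  | Assertion.conceptA A a => I.indMap a ∈ I.cI A
  | Assertion.roleA P a b => (I.indMap a, I.indMap b) ∈ I.rI P

/-- `I` is a (set) model of the TBox `T` and the set ABox `A`. -/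
def SetInterp.IsModelOf (I : SetInterp) (T : TBox) (A : Finset Assertion) : Prop :=
  (∀ ax ∈ T, I.SatisfiesAx ax) ∧ ∀ s ∈ A, I.SatisfiesAssertion s

def setTermVal (I : SetInterp) (f : Var → I.Δ) : Term → I.Δ
  | Term.var v => f v
  | Term.ind a => I.indMap a

def SetInterp.SatAtom (I : SetInterp) (f : Var → I.Δ) : QAtom → Prop
  | QAtom.conceptAt A t => setTermVal I f t ∈ I.cI A
  | QAtom.roleAt P t₁ t₂ => (setTermVal I f t₁, setTermVal I f t₂) ∈ I.rI P
  | QAtom.eqAt z t => f z = setTermVal I f t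

/-- `q(ā)` holds in the set interpretation `I`. -/
def SetInterp.SatCQ (I : SetInterp) (q : CQ) (a : List Ind) : Prop :=
  ∃ f : Var → I.Δ, q.answerVars.map f = a.map I.indMap ∧ ∀ atm ∈ q.atoms, I.SatAtom f atm

/-- Entailment of a concept inclusion from a TBox (standard set semantics). -/
def TBox.EntailsCI (T : TBox) (C D : DLConcept) : Prop :=
  ∀ I : SetInterp, (∀ ax ∈ T, I.SatisfiesAx ax) → I.conceptSet C ⊆ I.conceptSet D

/- ## The canonical bag model -/

/-- Domain elements of the canonical model: individuals and anonymous elements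
`w^j_{u,R}`. -/
inductive CanElem where
  | ind : Ind → CanElem
  | anon : CanElem → Role → ℕ → CanElem
  deriving DecidableEq

def CanElem.isAnon : CanElem → Prop
  | CanElem.ind _ => False
  | CanElem.anon _ _ _ => True

/-- A stage of the canonical-model construction: a set of active elements and
bag interpretations of the predicates. -/
structure PreInterp : Type where
  active : Set CanElem
  c : AtomicConcept → CanElem → ℕ∞
  r : AtomicRole → CanElem → CanElem → ℕ∞

def PreInterp.toInterp (P : PreInterp) : BagInterp where
  Δ := CanElem
  dne := ⟨CanElem.ind 0⟩
  indMap := CanElem.ind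
  indInj := fun a b h => by cases h; rfl
  cI := P.c
  rI := P.r

/-- Concept closure: `ccl(u,I,T)(C)` is the supremum of `C₀^I(u)` over all
concepts `C₀` with `T ⊨ C₀ ⊑ C`. -/
def cclI (T : TBox) (I : BagInterp) (C : DLConcept) (u : I.Δ) : ℕ∞ :=
  ⨆ C₀ : {C₀ : DLConcept // TBox.EntailsCI T C₀ C}, I.conceptMult C₀.1 u

def PreInterp.ccl (P : PreInterp) (T : TBox) (u : CanElem) (C : DLConcept) : ℕ∞ :=
  cclI T P.toInterp C u

/-- `δ = ccl(u,C_{i-1},T)(∃R) − (∃R)^{C_{i-1}}(u)` (truncated subtraction). -/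
def PreInterp.delta (P : PreInterp) (T : TBox) (u : CanElem) (R : Role) : ℕ∞ :=
  P.ccl T u (DLConcept.ex R) - P.toInterp.conceptMult (DLConcept.ex R) u

/-- The anonymous elements freshly added when stepping from `P`. -/
def PreInterp.NewAnon (P : PreInterp) (T : TBox) (w : CanElem) : Prop :=
  ∃ u R j, w = CanElem.anon u R j ∧ u ∈ P.active ∧ (j : ℕ∞) < P.delta T u R

/-- One step of the canonical-model construction. -/
def PreInterp.step (P : PreInterp) (T : TBox) : PreInterp where
  active := P.active ∪ {w | P.NewAnon T w}
  c := fun A u => if u ∈ P.active then P.ccl T u (DLConcept.atomic A) else 0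
  r := fun P₀ u v =>
    if u ∈ P.active ∧ v ∈ P.active then P.r P₀ u v
    else if ∃ j, v = CanElem.anon u (Role.atomic P₀) j ∧ P.NewAnon T v then 1
    else if ∃ j, u = CanElem.anon v (Role.inv P₀) j ∧ P.NewAnon T u then 1
    else 0

/-- The stages `C_i(K)` of the canonical bag model. -/
def canStage (K : Ontology) : ℕ → PreInterp
  | 0 =>
    { active := Set.range CanElem.ind
      c := fun A u =>
        match u with
        | CanElem.ind a => BagABox.mult K.abox (Assertion.conceptA A a)
        | _ => 0
      r := fun P u v =>
        match u, v with
        | CanElem.ind a, CanElem.ind b => BagABox.mult K.abox (Assertion.roleA P a b)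
        | _, _ => 0 }
  | (i + 1) => (canStage K i).step K.tbox

/-- The canonical bag model `C(K) = ⋃_{i ≥ 0} C_i(K)` (pointwise maximum). -/
def canInterp (K : Ontology) : BagInterp where
  Δ := CanElem
  dne := ⟨CanElem.ind 0⟩
  indMap := CanElem.ind
  indInj := fun a b h => by cases h; rfl
  cI := fun A u => ⨆ i, (canStage K i).c A u
  rI := fun P u v => ⨆ i, (canStage K i).r P u v

/-- The canonical bag model `C(⟨∅,A⟩)` of the ontology with empty TBox:
individuals as domain, every predicate interpreted by its ABox bag. -/
def emptyCanInterp (A : BagABox) : BagInterp where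
  Δ := Ind
  dne := ⟨0⟩
  indMap := id
  indInj := fun _ _ h => h
  cI := fun C a => BagABox.mult A (Assertion.conceptA C a)
  rI := fun P a b => BagABox.mult A (Assertion.roleA P a b)

/-- `[q,z]^{C(K)}`: bag answers over the canonical model computed only over
valuations sending the variables of `z` to anonymous elements and the remaining
existential variables to individuals. -/
def CQ.restrictedAnswer (q : CQ) (K : Ontology) (z : Finset Var) (a : List Ind) : ℕ∞ :=
  bagSum (fun f : {f : Var → CanElem //
      (∀ v, v ∉ q.vars → f v = CanElem.ind 0) ∧
      q.answerVars.map f = a.map CanElem.ind ∧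
      ∀ v ∈ q.existVars, (v ∈ z → CanElem.isAnon (f v)) ∧ (v ∉ z → ∃ b : Ind, f v = CanElem.ind b)} =>
    (q.atoms.map (QAtom.mult (canInterp K) f.1)).prod)

/- ## Ma-connected subsets, realisability, and the per-`z` rewritten query -/

/-- `t` is a variable belonging to `z`. -/
def Term.IsZVar (t : Term) (z : Finset Var) : Prop := ∃ v ∈ z, t = Term.var v

/-- Adjacency in the Gaifman graph restricted to nodes that are variables of `z`. -/
def CQ.zAdj (q : CQ) (z : Finset Var) : Term → Term → Prop := fun t₁ t₂ =>
  q.gaifmanAdj t₁ t₂ ∧ t₁.IsZVar z ∧ t₂.IsZVar z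

/-- `z'` is maximally connected in the anonymous part (ma-connected) within `z`. -/
def CQ.MAConnected (q : CQ) (z z' : Finset Var) : Prop :=
  z' ⊆ z ∧
  (∀ v ∈ z', ∀ w ∈ z, Relation.ReflTransGen (q.zAdj z) (Term.var v) (Term.var w) → w ∈ z') ∧
  (∀ v ∈ z', ∀ w ∈ z', Relation.ReflTransGen (q.zAdj z) (Term.var v) (Term.var w))

/-- `φ_{z'}`: the subconjunction of all atoms of `q` mentioning a variable of `z'`. -/
def CQ.subAtoms (q : CQ) (z' : Finset Var) : List QAtom :=
  q.atoms.filter (fun atm => decide (∃ v ∈ z', v ∈ QAtom.vars atm))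

def termsOfList (l : List QAtom) : List Term :=
  l.foldr (fun atm acc => QAtom.terms atm ++ acc) []

/-- `t_{z'}`: all terms occurring in `φ_{z'}` that are not variables of `z`. -/
def CQ.tTerms (q : CQ) (z z' : Finset Var) : List Term :=
  (termsOfList (q.subAtoms z')).filter (fun t => decide (¬ t.IsZVar z))

/-- `atm` is a legitimate choice of `α_{z'}`: an atom of `φ_{z'}` of the form
`P(t,z)` or `P(z,t)` with `z ∈ z'` and the term `t` not a variable of `z`. -/
def IsAlphaFor (q : CQ) (z z' : Finset Var) (atm : QAtom) : Prop :=
  atm ∈ q.subAtoms z' ∧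
  ((∃ P t v, v ∈ z' ∧ ¬ Term.IsZVar t z ∧ atm = QAtom.roleAt P t (Term.var v)) ∨
   (∃ P t v, v ∈ z' ∧ ¬ Term.IsZVar t z ∧ atm = QAtom.roleAt P (Term.var v) t))

def CQ.inds (q : CQ) : List Ind :=
  (termsOfList q.atoms).foldr (fun t acc => t.indsOf ++ acc) []

def CQ.maxInd (q : CQ) : Ind := q.inds.foldr max 0

/-- The individual `a` of `q^a_{z'}`: the individual among `t_{z'}` if one
exists, and a fresh individual otherwise. -/
def freshA (q : CQ) (z z' : Finset Var) : Ind :=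
  if h : ∃ c : Ind, Term.ind c ∈ q.tTerms z z' then h.choose else q.maxInd + 1

/-- A fresh individual `b` (distinct from `freshA`). -/
def freshB (q : CQ) : Ind := q.maxInd + 2

/-- The one-assertion bag ABox `A'` used to test realisability: `{P(a,b)}` if
`α_{z'} = P(t,z)` and `{P(b,a)}` if `α_{z'} = P(z,t)`. -/
def alphaABox (z' : Finset Var) (atm : QAtom) (a b : Ind) : BagABox :=
  match atm with
  | QAtom.roleAt P _ t₂ =>
      if Term.IsZVar t₂ z' then {Assertion.roleA P a b} else {Assertion.roleA P b a}
  | _ => 0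

def subVars (q : CQ) (z' : Finset Var) : List Var :=
  (q.subAtoms z').foldr (fun atm acc => QAtom.vars atm ++ acc) []

/-- The bag answer `(q^a_{z'})^{C(⟨T,A'⟩)}(⟨⟩)` of the Boolean query
`q^a_{z'}() = ∃x'.∃z'. φ_{z'} ∧ ⋀_{t ∈ t_{z'}}(t = a) ∧ ⋀_{z ∈ z'}(z ≠ a)`
over the canonical model of `⟨T,A'⟩`. -/
def realQAnswer (T : TBox) (q : CQ) (z z' : Finset Var) (atm : QAtom) : ℕ∞ :=
  bagSum (fun f : {f : Var → CanElem //
      (∀ v, v ∉ subVars q z' → f v = CanElem.ind 0) ∧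
      (∀ t ∈ q.tTerms z z',
        termVal (canInterp ⟨T, alphaABox z' atm (freshA q z z') (freshB q)⟩) f t
          = CanElem.ind (freshA q z z')) ∧
      ∀ v ∈ z', f v ≠ CanElem.ind (freshA q z z')} =>
    ((q.subAtoms z').map
      (QAtom.mult (canInterp ⟨T, alphaABox z' atm (freshA q z z') (freshB q)⟩) f.1)).prod)

/-- Equality-consistency of `z`: no equality atom `z = t` with `z ∈ z` and `t ∉ z`. -/
def EqConsistent (q : CQ) (z : Finset Var) : Prop :=
  ∀ v t, QAtom.eqAt v t ∈ q.atoms → v ∈ z → Term.IsZVar t z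

/-- The ma-connected subset `z'` is realisable by `T` (w.r.t. the chosen `α_{z'}`). -/
def RealisableMA (T : TBox) (q : CQ) (z z' : Finset Var) (atm : QAtom) : Prop :=
  1 ≤ realQAnswer T q z z' atm

/-- `z` is realisable by `T`: equality-consistent and every nonempty
ma-connected subset of `z` is realisable. -/
def RealisableZ (T : TBox) (q : CQ) (z : Finset Var) (alpha : Finset Var → QAtom) : Prop :=
  EqConsistent q z ∧
  ∀ z' : Finset Var, q.MAConnected z z' → z'.Nonempty → RealisableMA T q z z' (alpha z')

/-- The nonempty ma-connected subsets of `z`. -/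
def maSets (q : CQ) (z : Finset Var) : Finset (Finset Var) :=
  z.powerset.filter (fun z' => q.MAConnected z z' ∧ z'.Nonempty)

def tTermVars (q : CQ) (z z' : Finset Var) : List Var :=
  (q.tTerms z z').foldr (fun t acc => Term.varsOf t ++ acc) []

/-- The equalities identifying all the terms of `t_{z'}`. -/
def eqAtomsFor (q : CQ) (z z' : Finset Var) : List QAtom :=
  (tTermVars q z z').foldr
    (fun v acc => ((q.tTerms z z').map (fun t => QAtom.eqAt v t)) ++ acc) []

/-- Atoms of `q_z`: the atoms of `q` not mentioning a variable of `z`, plus,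
for each nonempty ma-connected `z' ⊆ z`, the atom `α_{z'}` together with the
equalities identifying the terms of `t_{z'}`. -/
def qzAtoms (q : CQ) (z : Finset Var) (alpha : Finset Var → QAtom) : List QAtom :=
  q.atoms.filter (fun atm => decide (¬ ∃ v ∈ z, v ∈ QAtom.vars atm))
    ++ (maSets q z).toList.foldr (fun z' acc => alpha z' :: (eqAtomsFor q z z' ++ acc)) []

/-- The CQ `q_z(x) = ∃y'. φ_z(x,y')`. -/
def qz (q : CQ) (z : Finset Var) (alpha : Finset Var → QAtom) : CQ where
  answerVars := q.answerVars
  existVars := q.existVars.filter (fun v => decide (∃ atm ∈ qzAtoms q z alpha, v ∈ QAtom.vars atm))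
  atoms := qzAtoms q z alpha

/- ## The BALG rewriting `q̄` -/

/-- Value of an atom of `q_z` after the rewriting step 3 (`chasing back'' with
the TBox): concept atoms `A(t)` become `⋁_{T ⊨ C ⊑ A} ζ_C(t)`, role atoms with a
`z`-variable become the corresponding truncated difference, and the remaining
atoms are evaluated as before. -/
def rewAtomVal (T : TBox) (I : BagInterp) (z : Finset Var) (f : Var → I.Δ) : QAtom → ℕ∞
  | QAtom.conceptAt A t => cclI T I (DLConcept.atomic A) (termVal I f t)
  | QAtom.roleAt P t₁ t₂ =>
      if Term.IsZVar t₂ z then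
        cclI T I (DLConcept.ex (Role.atomic P)) (termVal I f t₁)
          - I.conceptMult (DLConcept.ex (Role.atomic P)) (termVal I f t₁)
      else if Term.IsZVar t₁ z then
        cclI T I (DLConcept.ex (Role.inv P)) (termVal I f t₂)
          - I.conceptMult (DLConcept.ex (Role.inv P)) (termVal I f t₂)
      else I.rI P (termVal I f t₁) (termVal I f t₂)
  | QAtom.eqAt v t => if f v = termVal I f t then 1 else 0

/-- Bag answers of the BALG query `q̄_z`, obtained from `q_z` by projecting only
the variables of `y' ∖ z` and replacing atoms as in `rewAtomVal`. -/
def rewAnswer (T : TBox) (qq : CQ) (z : Finset Var) (I : BagInterp) (a : List Ind) : ℕ∞ :=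
  bagSum (fun f : {f : Var → I.Δ //
      (∀ v, v ∉ qq.answerVars ++ qq.existVars.filter (fun u => decide (u ∉ z)) →
        f v = I.indMap 0) ∧
      qq.answerVars.map f = a.map I.indMap} =>
    (qq.atoms.map (rewAtomVal T I z f.1)).prod)

/- ## BALG¹_ε queries -/

def Term.fvars (t : Term) : Finset Var :=
  match t with
  | Term.var v => {v}
  | Term.ind _ => ∅

/-- Syntax of BALG¹_ε queries. -/
inductive BQuery where
  | atomC : AtomicConcept → Term → BQuery
  | atomR : AtomicRole → Term → Term → BQuery
  | conj : BQuery → BQuery → BQuery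
  | eqSel : BQuery → Var → Term → BQuery
  | proj : List Var → BQuery → BQuery
  | maxU : BQuery → BQuery → BQuery
  | arithU : BQuery → BQuery → BQuery
  | diff : BQuery → BQuery → BQuery

/-- Answer variables of a BALG¹_ε query. -/
def BQuery.fv : BQuery → Finset Var
  | BQuery.atomC _ t => t.fvars
  | BQuery.atomR _ t₁ t₂ => t₁.fvars ∪ t₂.fvars
  | BQuery.conj q₁ q₂ => q₁.fv ∪ q₂.fv
  | BQuery.eqSel q _ t => q.fv ∪ t.fvars
  | BQuery.proj ys q => q.fv \ ys.toFinset
  | BQuery.maxU q₁ _ => q₁.fv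
  | BQuery.arithU q₁ _ => q₁.fv
  | BQuery.diff q₁ _ => q₁.fv

/-- Well-formedness of BALG¹_ε queries. -/
def BQuery.WF : BQuery → Prop
  | BQuery.atomC _ _ => True
  | BQuery.atomR _ _ _ => True
  | BQuery.conj q₁ q₂ => q₁.WF ∧ q₂.WF
  | BQuery.eqSel q x _ => q.WF ∧ x ∈ q.fv
  | BQuery.proj _ q => q.WF
  | BQuery.maxU q₁ q₂ => q₁.WF ∧ q₂.WF ∧ q₁.fv = q₂.fv
  | BQuery.arithU q₁ q₂ => q₁.WF ∧ q₂.WF ∧ q₁.fv = q₂.fv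
  | BQuery.diff q₁ q₂ => q₁.WF ∧ q₂.WF ∧ q₁.fv = q₂.fv

/-- Semantics of BALG¹_ε queries under a valuation of the answer variables. -/
def BQuery.val (I : BagInterp) : BQuery → (Var → I.Δ) → ℕ∞
  | BQuery.atomC A t, f => I.cI A (termVal I f t)
  | BQuery.atomR P t₁ t₂, f => I.rI P (termVal I f t₁) (termVal I f t₂)
  | BQuery.conj q₁ q₂, f => q₁.val I f * q₂.val I f
  | BQuery.eqSel q x t, f => if f x = termVal I f t then q.val I f else 0
  | BQuery.proj ys q, f => bagSum (fun g : {g : Var → I.Δ // ∀ v, v ∉ ys → g v = f v} => q.val I g.1)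
  | BQuery.maxU q₁ q₂, f => max (q₁.val I f) (q₂.val I f)
  | BQuery.arithU q₁ q₂, f => q₁.val I f + q₂.val I f
  | BQuery.diff q₁ q₂, f => q₁.val I f - q₂.val I f

/-- Bag answers of a BALG¹_ε query with answer variables `xs` on a tuple `a`. -/
def BQuery.answer (Q : BQuery) (xs : List Var) (I : BagInterp) (a : List Ind) : ℕ∞ :=
  if a.length = xs.length then Q.val I (fun v => I.indMap (a.getD (xs.idxOf v) 0)) else 0

/- ## Enumerated bags, e-homomorphisms, and e-valuations -/

/-- Enumerated copies of a bag of domain elements (for an atomic concept). -/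
def EBagC (I : BagInterp) (A : AtomicConcept) : Type :=
  {p : I.Δ × ℕ // 1 ≤ p.2 ∧ (p.2 : ℕ∞) ≤ I.cI A p.1}

/-- Enumerated copies of a bag of pairs (for an atomic role). -/
def EBagR (I : BagInterp) (P : AtomicRole) : Type :=
  {p : (I.Δ × I.Δ) × ℕ // 1 ≤ p.2 ∧ (p.2 : ℕ∞) ≤ I.rI P p.1.1 p.1.2}

/-- An e-homomorphism between the enumerated versions of two bag interpretations. -/
structure EHom (I J : BagInterp) where
  h : I.Δ → J.Δ
  hInd : ∀ a : Ind, h (I.indMap a) = J.indMap a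
  hC : ∀ A : AtomicConcept, EBagC I A → EBagC J A
  hC_fst : ∀ (A : AtomicConcept) (x : EBagC I A), (hC A x).1.1 = h x.1.1
  hR : ∀ P : AtomicRole, EBagR I P → EBagR J P
  hR_fst : ∀ (P : AtomicRole) (x : EBagR I P), (hR P x).1.1 = (h x.1.1.1, h x.1.1.2)

/-- Predicate-injectivity on individuals of an e-homomorphism. -/
def EHom.PredInj {I J : BagInterp} (e : EHom I J) : Prop :=
  ∀ u : I.Δ, (∃ a : Ind, e.h u = J.indMap a) →
    (∀ A : AtomicConcept, ∀ x y : EBagC I A,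
      x.1.1 = u → y.1.1 = u → x.1.2 ≠ y.1.2 → e.hC A x ≠ e.hC A y) ∧
    (∀ P : AtomicRole, ∀ x y : EBagR I P, x.1.1.1 = u → y.1.1.1 = u →
      (x.1.1.2, x.1.2) ≠ (y.1.1.2, y.1.2) → e.hR P x ≠ e.hR P y) ∧
    (∀ P : AtomicRole, ∀ x y : EBagR I P, x.1.1.2 = u → y.1.1.2 = u →
      (x.1.1.1, x.1.2) ≠ (y.1.1.1, y.1.2) → e.hR P x ≠ e.hR P y)

/-- Enumerated atoms of a CQ (seen as a bag of atoms). -/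
def EAtom (q : CQ) : Type := {p : QAtom × ℕ // 1 ≤ p.2 ∧ p.2 ≤ q.atoms.count p.1}

/-- An e-valuation of the enumerated query `q^e` over the enumerated
interpretation `I^e`. -/
structure EVal (q : CQ) (I : BagInterp) where
  ν : Var → I.Δ
  hjunk : ∀ v, v ∉ q.vars → ν v = I.indMap 0
  heq : ∀ z t, QAtom.eqAt z t ∈ q.atoms → ν z = termVal I ν t
  ℓ : EAtom q → ℕ
  hone : ∀ e : EAtom q, 1 ≤ ℓ e
  hconcept : ∀ (e : EAtom q) (A : AtomicConcept) (t : Term),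
    e.1.1 = QAtom.conceptAt A t → (ℓ e : ℕ∞) ≤ I.cI A (termVal I ν t)
  hrole : ∀ (e : EAtom q) (P : AtomicRole) (t₁ t₂ : Term),
    e.1.1 = QAtom.roleAt P t₁ t₂ → (ℓ e : ℕ∞) ≤ I.rI P (termVal I ν t₁) (termVal I ν t₂)
  heqm : ∀ (e : EAtom q) (z : Var) (t : Term), e.1.1 = QAtom.eqAt z t → ℓ e = 1

/-- The tuple of domain elements to which an e-atom is sent by an e-valuation. -/
def EVal.imgTerms {q : CQ} {I : BagInterp} (ev : EVal q I) (e : EAtom q) : List I.Δ :=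
  (QAtom.terms e.1.1).map (termVal I ev.ν)

/-- The enumerated image of an e-atom under an e-valuation. -/
def EVal.img {q : CQ} {I : BagInterp} (ev : EVal q I) (e : EAtom q) : List I.Δ × ℕ :=
  (ev.imgTerms e, ev.ℓ e)

/- ## Auxiliary concrete queries -/

/-- The CQ `ζ_C(x)`: `A(x)`, `∃y.P(x,y)` or `∃y.P(y,x)`. -/
def zetaCQ : DLConcept → CQ
  | DLConcept.atomic A => ⟨[0], [], [QAtom.conceptAt A (Term.var 0)]⟩
  | DLConcept.ex (Role.atomic P) => ⟨[0], [1], [QAtom.roleAt P (Term.var 0) (Term.var 1)]⟩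
  | DLConcept.ex (Role.inv P) => ⟨[0], [1], [QAtom.roleAt P (Term.var 1) (Term.var 0)]⟩

/-- The CQ `q(x) = R(x,x)`. -/
def selfCQ (P : AtomicRole) : CQ := ⟨[0], [], [QAtom.roleAt P (Term.var 0) (Term.var 0)]⟩

/- ## Auxiliary lemmas for Statement 19 -/

namespace S19

lemma le_bagSum {α : Type*} (f : α → ℕ∞) (v : α) : f v ≤ bagSum f := by
  have h := le_iSup (fun s : Finset α => ∑ x ∈ s, f x) ({v} : Finset α)
  simpa [bagSum] using h

lemma bagSum_le {α : Type*} {f : α → ℕ∞} {c : ℕ∞}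
    (h : ∀ s : Finset α, ∑ x ∈ s, f x ≤ c) : bagSum f ≤ c := iSup_le h

lemma sum_le_one_of_unique {α : Type*} {f : α → ℕ∞} (h1 : ∀ x, f x ≤ 1)
    (h2 : ∀ x y, f x ≠ 0 → f y ≠ 0 → x = y) (s : Finset α) :
    ∑ x ∈ s, f x ≤ 1 := by
  by_cases hex : ∃ x ∈ s, f x ≠ 0
  · obtain ⟨x₀, hx₀, hfx₀⟩ := hex
    have hs : ∑ x ∈ s, f x = f x₀ := by
      refine Finset.sum_eq_single_of_mem x₀ hx₀ (fun y hy hne => ?_)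
      by_contra hy0
      exact hne (h2 y x₀ hy0 hfx₀)
    rw [hs]; exact h1 x₀
  · push_neg at hex
    have : ∑ x ∈ s, f x = 0 := Finset.sum_eq_zero (fun x hx => hex x hx)
    rw [this]; exact zero_le

lemma sum_le_one_of_unique_on {α : Type*} {f : α → ℕ∞} (s : Finset α)
    (h1 : ∀ x ∈ s, f x ≤ 1)
    (h2 : ∀ x ∈ s, ∀ y ∈ s, f x ≠ 0 → f y ≠ 0 → x = y) :
    ∑ x ∈ s, f x ≤ 1 := by
  by_cases hex : ∃ x ∈ s, f x ≠ 0
  · obtain ⟨x₀, hx₀, hfx₀⟩ := hex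
    have hs : ∑ x ∈ s, f x = f x₀ := by
      refine Finset.sum_eq_single_of_mem x₀ hx₀ (fun y hy hne => ?_)
      by_contra hy0
      exact hne (h2 y hy x₀ hx₀ hy0 hfx₀)
    rw [hs]; exact h1 x₀ hx₀
  · push_neg at hex
    have : ∑ x ∈ s, f x = 0 := Finset.sum_eq_zero (fun x hx => hex x hx)
    rw [this]; exact zero_le

lemma bagSum_le_one {α : Type*} {f : α → ℕ∞} (h1 : ∀ x, f x ≤ 1)
    (h2 : ∀ x y, f x ≠ 0 → f y ≠ 0 → x = y) : bagSum f ≤ 1 :=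
  bagSum_le (sum_le_one_of_unique h1 h2)

lemma enat_lt_one {j : ℕ} (h : (j : ℕ∞) < 1) : j = 0 := by
  cases j with
  | zero => rfl
  | succ n =>
    exfalso
    have : (1 : ℕ∞) ≤ ((n + 1 : ℕ) : ℕ∞) := by
      exact_mod_cast Nat.one_le_iff_ne_zero.2 (Nat.succ_ne_zero n)
    exact absurd h (not_lt.2 this)

lemma cclI_le_one {T : TBox} {I : BagInterp}
    (h : ∀ C u, I.conceptMult C u ≤ 1) (C : DLConcept) (u : I.Δ) :
    cclI T I C u ≤ 1 :=
  iSup_le fun C₀ => h C₀.1 u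

/-- Depth of a canonical-model element (for acyclicity arguments). -/
def depth : CanElem → ℕ
  | CanElem.ind _ => 0
  | CanElem.anon u _ _ => depth u + 1

lemma ne_anon_anon (u : CanElem) (R S : Role) (j k : ℕ) :
    u ≠ CanElem.anon (CanElem.anon u R j) S k := by
  intro h
  have : depth u = depth u + 2 := by
    conv_lhs => rw [h]
    simp only [depth]
  omega


/-- Flip of a role. -/
def rflip : Role → Role
  | Role.atomic P => Role.inv P
  | Role.inv P => Role.atomic P

lemma one_le_of_ne_zero {x : ℕ∞} (h : x ≠ 0) : 1 ≤ x :=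
  ENat.one_le_iff_ne_zero.2 h

lemma sum_le_bagSum {α : Type*} (f : α → ℕ∞) (s : Finset α) :
    ∑ x ∈ s, f x ≤ bagSum f := le_iSup (fun s : Finset α => ∑ x ∈ s, f x) s

/-- The structural invariant of the stages of the canonical model of a
single-role-assertion ontology. -/
structure Good (P₀ : AtomicRole) (c d : Ind) (P : PreInterp) : Prop where
  cm_le : ∀ C u, P.toInterp.conceptMult C u ≤ 1
  supp_r : ∀ R u v, P.r R u v ≠ 0 → u ∈ P.active ∧ v ∈ P.active
  ind_active : ∀ x : Ind, CanElem.ind x ∈ P.active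
  shape : ∀ R u v, P.r R u v ≠ 0 →
    (u = CanElem.ind c ∧ v = CanElem.ind d ∧ R = P₀) ∨
    v = CanElem.anon u (Role.atomic R) 0 ∨ u = CanElem.anon v (Role.inv R) 0
  parent : ∀ w S j, CanElem.anon w S j ∈ P.active →
    w ∈ P.active ∧ 1 ≤ P.toInterp.roleMult S w (CanElem.anon w S j)
  base : 1 ≤ P.r P₀ (CanElem.ind c) (CanElem.ind d)

variable {T : TBox} {P₀ : AtomicRole} {c d : Ind} {P : PreInterp}

lemma Good.roleMult_le_one (hg : Good P₀ c d P) (R : Role) (u v : CanElem) :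
    P.toInterp.roleMult R u v ≤ 1 :=
  le_trans (le_bagSum (fun v => P.toInterp.roleMult R u v) v)
    (hg.cm_le (DLConcept.ex R) u)

lemma Good.r_le_one (hg : Good P₀ c d P) (R : AtomicRole) (u v : CanElem) :
    P.r R u v ≤ 1 :=
  hg.roleMult_le_one (Role.atomic R) u v

lemma Good.delta_zero (hg : Good P₀ c d P) {u : CanElem} {R : Role}
    (h : 1 ≤ P.toInterp.conceptMult (DLConcept.ex R) u) : P.delta T u R = 0 := by
  unfold PreInterp.delta PreInterp.ccl
  exact tsub_eq_zero_of_le (le_trans (cclI_le_one hg.cm_le _ _) h)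

lemma Good.delta_le_one (hg : Good P₀ c d P) (u : CanElem) (R : Role) :
    P.delta T u R ≤ 1 :=
  le_trans tsub_le_self (cclI_le_one hg.cm_le _ _)

lemma Good.not_newAnon_of_active (hg : Good P₀ c d P) {u : CanElem}
    (hu : u ∈ P.active) : ¬ P.NewAnon T u := by
  rintro ⟨p, R, j, rfl, hp, hlt⟩
  have h1 := (hg.parent p R j hu).2
  have hδ : P.delta T p R = 0 :=
    hg.delta_zero (le_trans h1 (le_bagSum (fun v => P.toInterp.roleMult R p v) _))
  rw [hδ] at hlt
  simp at hlt

lemma Good.newAnon_anon (hg : Good P₀ c d P) {p : CanElem} {R : Role} {j : ℕ}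
    (h : P.NewAnon T (CanElem.anon p R j)) :
    j = 0 ∧ p ∈ P.active ∧ 0 < P.delta T p R := by
  obtain ⟨p', R', j', heq, hp, hlt⟩ := h
  obtain ⟨rfl, rfl, rfl⟩ : p = p' ∧ R = R' ∧ j = j' := by
    cases heq; exact ⟨rfl, rfl, rfl⟩
  refine ⟨?_, hp, lt_of_le_of_lt (zero_le) hlt⟩
  exact enat_lt_one (lt_of_lt_of_le hlt (hg.delta_le_one _ _))

lemma step_roleMult_active {R : Role} {u v : CanElem}
    (hu : u ∈ P.active) (hv : v ∈ P.active) :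
    (P.step T).toInterp.roleMult R u v = P.toInterp.roleMult R u v := by
  cases R with
  | atomic Q =>
      show (P.step T).r Q u v = P.r Q u v
      show (if u ∈ P.active ∧ v ∈ P.active then P.r Q u v else _) = P.r Q u v
      rw [if_pos ⟨hu, hv⟩]
  | inv Q =>
      show (P.step T).r Q v u = P.r Q v u
      show (if v ∈ P.active ∧ u ∈ P.active then P.r Q v u else _) = P.r Q v u
      rw [if_pos ⟨hv, hu⟩]

lemma step_roleMult_ne {R : Role} {u v : CanElem}
    (h : (P.step T).toInterp.roleMult R u v ≠ 0) :
    (u ∈ P.active ∧ v ∈ P.active ∧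
      (P.step T).toInterp.roleMult R u v = P.toInterp.roleMult R u v) ∨
    ((∃ j, v = CanElem.anon u R j ∧ P.NewAnon T v) ∧
      (P.step T).toInterp.roleMult R u v = 1) ∨
    ((∃ j, u = CanElem.anon v (rflip R) j ∧ P.NewAnon T u) ∧
      (P.step T).toInterp.roleMult R u v = 1) := by
  cases R with
  | atomic Q =>
      have hval : (P.step T).toInterp.roleMult (Role.atomic Q) u v =
          (if u ∈ P.active ∧ v ∈ P.active then P.r Q u v
           else if ∃ j, v = CanElem.anon u (Role.atomic Q) j ∧ P.NewAnon T v then 1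
           else if ∃ j, u = CanElem.anon v (Role.inv Q) j ∧ P.NewAnon T u then 1
           else 0) := rfl
      rw [hval] at h ⊢
      split_ifs at h ⊢ with h1 h2 h3
      · exact Or.inl ⟨h1.1, h1.2, rfl⟩
      · exact Or.inr (Or.inl ⟨h2, rfl⟩)
      · exact Or.inr (Or.inr ⟨h3, rfl⟩)
      · exact absurd rfl h
  | inv Q =>
      have hval : (P.step T).toInterp.roleMult (Role.inv Q) u v =
          (if v ∈ P.active ∧ u ∈ P.active then P.r Q v u
           else if ∃ j, u = CanElem.anon v (Role.atomic Q) j ∧ P.NewAnon T u then 1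
           else if ∃ j, v = CanElem.anon u (Role.inv Q) j ∧ P.NewAnon T v then 1
           else 0) := rfl
      rw [hval] at h ⊢
      split_ifs at h ⊢ with h1 h2 h3
      · exact Or.inl ⟨h1.2, h1.1, rfl⟩
      · exact Or.inr (Or.inr ⟨h2, rfl⟩)
      · exact Or.inr (Or.inl ⟨h3, rfl⟩)
      · exact absurd rfl h


lemma Good.step_roleMult_le_one (hg : Good P₀ c d P) (R : Role) (u v : CanElem) :
    (P.step T).toInterp.roleMult R u v ≤ 1 := by
  by_cases h : (P.step T).toInterp.roleMult R u v = 0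
  · rw [h]; exact zero_le
  · rcases step_roleMult_ne h with ⟨_, _, he⟩ | ⟨_, he⟩ | ⟨_, he⟩
    · rw [he]; exact hg.roleMult_le_one R u v
    · rw [he]
    · rw [he]

lemma Good.step_parent_edge (hg : Good P₀ c d P) {p : CanElem} {R : Role} {j : ℕ}
    (h : P.NewAnon T (CanElem.anon p R j)) :
    (P.step T).toInterp.roleMult R p (CanElem.anon p R j) = 1 := by
  have hna : CanElem.anon p R j ∉ P.active := fun ha => hg.not_newAnon_of_active ha h
  cases R with
  | atomic Q =>
      show (if p ∈ P.active ∧ CanElem.anon p (Role.atomic Q) j ∈ P.active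
          then P.r Q p (CanElem.anon p (Role.atomic Q) j)
          else if ∃ j', CanElem.anon p (Role.atomic Q) j =
              CanElem.anon p (Role.atomic Q) j' ∧ P.NewAnon T (CanElem.anon p (Role.atomic Q) j)
            then 1
          else if ∃ j', p = CanElem.anon (CanElem.anon p (Role.atomic Q) j) (Role.inv Q) j' ∧
              P.NewAnon T p then 1
          else 0) = 1
      rw [if_neg (fun hc => hna hc.2), if_pos ⟨j, rfl, h⟩]
  | inv Q =>
      show (if CanElem.anon p (Role.inv Q) j ∈ P.active ∧ p ∈ P.active
          then P.r Q (CanElem.anon p (Role.inv Q) j) p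
          else if ∃ j', p = CanElem.anon (CanElem.anon p (Role.inv Q) j) (Role.atomic Q) j' ∧
              P.NewAnon T p then 1
          else if ∃ j', CanElem.anon p (Role.inv Q) j =
              CanElem.anon p (Role.inv Q) j' ∧ P.NewAnon T (CanElem.anon p (Role.inv Q) j)
            then 1
          else 0) = 1
      rw [if_neg (fun hc => hna hc.1),
        if_neg (fun hc => by obtain ⟨j', he, _⟩ := hc; exact ne_anon_anon p _ _ _ _ he),
        if_pos ⟨j, rfl, h⟩]

lemma enat_add_tsub_le_one {m k : ℕ∞} (hm : m ≤ 1) (hk : k ≤ 1) :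
    m + (k - m) ≤ 1 := by
  rcases le_total k m with h | h
  · rw [tsub_eq_zero_of_le h, add_zero]; exact hm
  · rw [add_tsub_cancel_of_le h]; exact hk

lemma Good.step_cm_le (hg : Good P₀ c d P) (C : DLConcept) (u : CanElem) :
    (P.step T).toInterp.conceptMult C u ≤ 1 := by
  cases C with
  | atomic A =>
      show (if u ∈ P.active then P.ccl T u (DLConcept.atomic A) else 0) ≤ 1
      split
      · exact cclI_le_one hg.cm_le _ _
      · exact zero_le
  | ex R =>
      refine bagSum_le (fun s => ?_)
      by_cases hu : u ∈ P.active
      · -- active case: old row plus at most δ new children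
        have hsplit := Finset.sum_filter_add_sum_filter_not s (fun v => v ∈ P.active)
          (fun v => (P.step T).toInterp.roleMult R u v)
        have h1 : ∑ v ∈ s.filter (fun v => v ∈ P.active),
            (P.step T).toInterp.roleMult R u v ≤
            P.toInterp.conceptMult (DLConcept.ex R) u := by
          have heq : ∑ v ∈ s.filter (fun v => v ∈ P.active),
              (P.step T).toInterp.roleMult R u v =
              ∑ v ∈ s.filter (fun v => v ∈ P.active), P.toInterp.roleMult R u v := by
            refine Finset.sum_congr rfl (fun v hv => ?_)
            exact step_roleMult_active hu (Finset.mem_filter.1 hv).2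
          rw [heq]
          exact sum_le_bagSum _ _
        have h2 : ∑ v ∈ s.filter (fun v => ¬ v ∈ P.active),
            (P.step T).toInterp.roleMult R u v ≤ P.delta T u R := by
          by_cases hex : ∃ v ∈ s.filter (fun v => ¬ v ∈ P.active),
              (P.step T).toInterp.roleMult R u v ≠ 0
          · obtain ⟨v₀, hv₀, hnz⟩ := hex
            have hv₀n : ¬ v₀ ∈ P.active := (Finset.mem_filter.1 hv₀).2
            rcases step_roleMult_ne hnz with ⟨_, hva, _⟩ | ⟨⟨j, hvj, hna⟩, _⟩ | ⟨⟨j, huj, hna⟩, _⟩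
            · exact absurd hva hv₀n
            · obtain ⟨-, -, hδ⟩ := hg.newAnon_anon (hvj ▸ hna)
              have h1δ : (1 : ℕ∞) ≤ P.delta T u R := one_le_of_ne_zero (by
                intro h0; rw [h0] at hδ; exact absurd hδ (lt_irrefl 0))
              refine le_trans ?_ h1δ
              have hshape : ∀ w', w' ∈ s.filter (fun v => ¬ v ∈ P.active) →
                  (P.step T).toInterp.roleMult R u w' ≠ 0 →
                  w' = CanElem.anon u R 0 := by
                intro w' hw' hnz'
                have hw'n : ¬ w' ∈ P.active := (Finset.mem_filter.1 hw').2
                rcases step_roleMult_ne hnz' with ⟨_, hva, _⟩ |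
                  ⟨⟨j', hvj', hna'⟩, _⟩ | ⟨⟨j', huj', hna'⟩, _⟩
                · exact absurd hva hw'n
                · obtain ⟨hj0', -, -⟩ := hg.newAnon_anon (hvj' ▸ hna')
                  rw [hvj', hj0']
                · exact absurd hna' (hg.not_newAnon_of_active hu)
              refine sum_le_one_of_unique_on _
                (fun x _ => hg.step_roleMult_le_one R u x)
                (fun x hx y hy hfx hfy => ?_)
              rw [hshape x hx hfx, hshape y hy hfy]
            · exact absurd (hna) (hg.not_newAnon_of_active hu)
          · push_neg at hex
            have : ∑ v ∈ s.filter (fun v => ¬ v ∈ P.active),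
                (P.step T).toInterp.roleMult R u v = 0 :=
              Finset.sum_eq_zero (fun v hv => hex v hv)
            rw [this]; exact zero_le
        calc ∑ v ∈ s, (P.step T).toInterp.roleMult R u v
            = _ + _ := hsplit.symm
          _ ≤ P.toInterp.conceptMult (DLConcept.ex R) u + P.delta T u R :=
              add_le_add h1 h2
          _ ≤ 1 := by
              unfold PreInterp.delta
              unfold PreInterp.ccl
              exact enat_add_tsub_le_one (hg.cm_le _ _) (cclI_le_one hg.cm_le _ _)
      · -- inactive case: at most one nonzero entry (the parent edge of `u`)
        refine sum_le_one_of_unique (fun v => hg.step_roleMult_le_one R u v)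
          (fun v w hv hw => ?_) s
        have hcase : ∀ x : CanElem, (P.step T).toInterp.roleMult R u x ≠ 0 →
            ∃ j, u = CanElem.anon x (rflip R) j := by
          intro x hx
          rcases step_roleMult_ne hx with ⟨hua, _, _⟩ | ⟨⟨j, hxj, hna⟩, _⟩ | ⟨⟨j, huj, _⟩, _⟩
          · exact absurd hua hu
          · obtain ⟨-, hpa, -⟩ := hg.newAnon_anon (hxj ▸ hna)
            exact absurd hpa hu
          · exact ⟨j, huj⟩
        obtain ⟨j₁, h₁⟩ := hcase v hv
        obtain ⟨j₂, h₂⟩ := hcase w hw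
        rw [h₁] at h₂
        cases h₂
        rfl


lemma Good.step (hg : Good P₀ c d P) : Good P₀ c d (P.step T) := by
  refine ⟨hg.step_cm_le, ?_, ?_, ?_, ?_, ?_⟩
  · -- supp_r
    intro R u v h
    rcases step_roleMult_ne (R := Role.atomic R) h with ⟨hu, hv, _⟩ |
      ⟨⟨j, hvj, hna⟩, _⟩ | ⟨⟨j, huj, hna⟩, _⟩
    · exact ⟨Or.inl hu, Or.inl hv⟩
    · obtain ⟨-, hpa, -⟩ := hg.newAnon_anon (hvj ▸ hna)
      exact ⟨Or.inl hpa, Or.inr (hvj ▸ hna)⟩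
    · obtain ⟨-, hpa, -⟩ := hg.newAnon_anon (huj ▸ hna)
      exact ⟨Or.inr (huj ▸ hna), Or.inl hpa⟩
  · -- ind_active
    intro x
    exact Or.inl (hg.ind_active x)
  · -- shape
    intro R u v h
    rcases step_roleMult_ne (R := Role.atomic R) h with ⟨hu, hv, he⟩ |
      ⟨⟨j, hvj, hna⟩, _⟩ | ⟨⟨j, huj, hna⟩, _⟩
    · exact hg.shape R u v (by
        have : (P.step T).r R u v = P.r R u v := he
        rw [← this]; exact h)
    · obtain ⟨hj0, -, -⟩ := hg.newAnon_anon (hvj ▸ hna)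
      exact Or.inr (Or.inl (by rw [hvj, hj0]))
    · obtain ⟨hj0, -, -⟩ := hg.newAnon_anon (huj ▸ hna)
      exact Or.inr (Or.inr (by rw [huj, hj0]; rfl))
  · -- parent
    intro w S j hact
    rcases hact with hact | hact
    · obtain ⟨hw, hedge⟩ := hg.parent w S j hact
      refine ⟨Or.inl hw, ?_⟩
      rw [step_roleMult_active hw hact]
      exact hedge
    · have hna : P.NewAnon T (CanElem.anon w S j) := hact
      obtain ⟨-, hw, -⟩ := hg.newAnon_anon hna
      refine ⟨Or.inl hw, ?_⟩
      rw [hg.step_parent_edge hna]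
  · -- base
    have hu := hg.ind_active c
    have hv := hg.ind_active d
    have := step_roleMult_active (T := T) (R := Role.atomic P₀) hu hv
    show 1 ≤ (P.step T).toInterp.roleMult (Role.atomic P₀) (CanElem.ind c) (CanElem.ind d)
    rw [this]
    exact hg.base

lemma count_singleton_le_one (a b : Assertion) :
    (BagABox.mult ({b} : Multiset Assertion) a) ≤ 1 := by
  unfold BagABox.mult
  rw [Multiset.count_singleton]
  split <;> simp

lemma good_zero (T : TBox) (P₀ : AtomicRole) (c d : Ind) :
    Good P₀ c d (canStage ⟨T, ({Assertion.roleA P₀ c d} : Multiset Assertion)⟩ 0) := by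
  set K' : Ontology := ⟨T, ({Assertion.roleA P₀ c d} : Multiset Assertion)⟩ with hK'
  have hrval : ∀ (Q : AtomicRole) (u v : CanElem), (canStage K' 0).r Q u v ≠ 0 →
      Q = P₀ ∧ u = CanElem.ind c ∧ v = CanElem.ind d := by
    intro Q u v h
    cases u with
    | anon _ _ _ => exact absurd rfl h
    | ind a =>
      cases v with
      | anon _ _ _ => exact absurd rfl h
      | ind b =>
        have : BagABox.mult K'.abox (Assertion.roleA Q a b) ≠ 0 := h
        unfold BagABox.mult at this
        rw [Multiset.count_singleton] at this
        split at this
        · rename_i heq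
          cases heq
          exact ⟨rfl, rfl, rfl⟩
        · exact absurd (by simpa using this : False) (fun h => h)
  refine ⟨?_, ?_, ?_, ?_, ?_, ?_⟩
  · intro C u
    cases C with
    | atomic A =>
        show (canStage K' 0).c A u ≤ 1
        cases u with
        | ind a =>
            show BagABox.mult K'.abox (Assertion.conceptA A a) ≤ 1
            exact count_singleton_le_one _ _
        | anon _ _ _ => exact zero_le
    | ex R =>
        refine bagSum_le_one (fun v => ?_) (fun v w hv hw => ?_)
        · cases R with
          | atomic Q =>
              show (canStage K' 0).r Q u v ≤ 1
              cases u with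
              | ind a =>
                cases v with
                | ind b => exact count_singleton_le_one _ _
                | anon _ _ _ => exact le_of_eq rfl |>.trans (zero_le)
              | anon _ _ _ => exact le_of_eq rfl |>.trans (zero_le)
          | inv Q =>
              show (canStage K' 0).r Q v u ≤ 1
              cases v with
              | ind a =>
                cases u with
                | ind b => exact count_singleton_le_one _ _
                | anon _ _ _ => exact le_of_eq rfl |>.trans (zero_le)
              | anon _ _ _ => exact le_of_eq rfl |>.trans (zero_le)
        · cases R with
          | atomic Q =>
              obtain ⟨-, -, h1⟩ := hrval Q u v hv
              obtain ⟨-, -, h2⟩ := hrval Q u w hw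
              rw [h1, h2]
          | inv Q =>
              obtain ⟨-, h1, -⟩ := hrval Q v u hv
              obtain ⟨-, h2, -⟩ := hrval Q w u hw
              rw [h1, h2]
  · intro R u v h
    obtain ⟨-, rfl, rfl⟩ := hrval R u v h
    exact ⟨⟨c, rfl⟩, ⟨d, rfl⟩⟩
  · intro x
    exact ⟨x, rfl⟩
  · intro R u v h
    obtain ⟨rfl, rfl, rfl⟩ := hrval R u v h
    exact Or.inl ⟨rfl, rfl, rfl⟩
  · intro w S j hact
    obtain ⟨x, hx⟩ := hact
    exact absurd hx (by simp)
  · show (1 : ℕ∞) ≤ BagABox.mult K'.abox (Assertion.roleA P₀ c d)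
    unfold BagABox.mult
    rw [Multiset.count_singleton, if_pos rfl]
    exact le_refl 1

lemma good (T : TBox) (P₀ : AtomicRole) (c d : Ind) (i : ℕ) :
    Good P₀ c d (canStage ⟨T, ({Assertion.roleA P₀ c d} : Multiset Assertion)⟩ i) := by
  induction i with
  | zero => exact good_zero T P₀ c d
  | succ n ih => exact ih.step


section Exclusions

variable (T : TBox) (P₀ : AtomicRole) (c d : Ind)


lemma stage_cm_base (i : ℕ) :
    1 ≤ (canStage (⟨T, ({Assertion.roleA P₀ c d} : Multiset Assertion)⟩ : Ontology) i).toInterp.conceptMult (DLConcept.ex (Role.atomic P₀)) (CanElem.ind c) := by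
  have hb := (good T P₀ c d i).base
  exact le_trans hb (le_bagSum
    (fun v => (canStage (⟨T, ({Assertion.roleA P₀ c d} : Multiset Assertion)⟩ : Ontology) i).toInterp.roleMult (Role.atomic P₀) (CanElem.ind c) v) _)

lemma stage_cm_base_inv (i : ℕ) :
    1 ≤ (canStage (⟨T, ({Assertion.roleA P₀ c d} : Multiset Assertion)⟩ : Ontology) i).toInterp.conceptMult (DLConcept.ex (Role.inv P₀)) (CanElem.ind d) := by
  have hb := (good T P₀ c d i).base
  exact le_trans hb (le_bagSum
    (fun v => (canStage (⟨T, ({Assertion.roleA P₀ c d} : Multiset Assertion)⟩ : Ontology) i).toInterp.roleMult (Role.inv P₀) (CanElem.ind d) v) (CanElem.ind c))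

/-- X1: there is never an anonymous `P₀`-child of `c`. -/
lemma X1 (i : ℕ) (j : ℕ) :
    (canStage (⟨T, ({Assertion.roleA P₀ c d} : Multiset Assertion)⟩ : Ontology) i).r P₀ (CanElem.ind c) (CanElem.anon (CanElem.ind c) (Role.atomic P₀) j) = 0 := by
  induction i with
  | zero => rfl
  | succ n ih =>
    by_contra h
    have hg := good T P₀ c d n
    rcases step_roleMult_ne (R := Role.atomic P₀) h with ⟨hu, hv, he⟩ |
      ⟨⟨j', hvj, hna⟩, _⟩ | ⟨⟨j', huj, hna⟩, _⟩
    · exact h (Eq.trans (he : _ = (canStage (⟨T, ({Assertion.roleA P₀ c d} : Multiset Assertion)⟩ : Ontology) n).r P₀ _ _) ih)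
    · obtain ⟨hpc, hRR, hjj⟩ : CanElem.ind c = CanElem.ind c ∧
        Role.atomic P₀ = Role.atomic P₀ ∧ j = j' := by cases hvj; exact ⟨rfl, rfl, rfl⟩
      obtain ⟨-, -, hδ⟩ := hg.newAnon_anon (hvj ▸ hna)
      rw [hg.delta_zero (stage_cm_base T P₀ c d n)] at hδ
      exact absurd hδ (lt_irrefl 0)
    · exact CanElem.noConfusion huj
  
/-- X2: there is never an anonymous inverse-`P₀`-child of `d`. -/
lemma X2 (i : ℕ) (j : ℕ) :
    (canStage (⟨T, ({Assertion.roleA P₀ c d} : Multiset Assertion)⟩ : Ontology) i).r P₀ (CanElem.anon (CanElem.ind d) (Role.inv P₀) j) (CanElem.ind d) = 0 := by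
  induction i with
  | zero => rfl
  | succ n ih =>
    by_contra h
    have hg := good T P₀ c d n
    rcases step_roleMult_ne (R := Role.atomic P₀) h with ⟨hu, hv, he⟩ |
      ⟨⟨j', hvj, hna⟩, _⟩ | ⟨⟨j', huj, hna⟩, _⟩
    · exact h (Eq.trans (he : _ = (canStage (⟨T, ({Assertion.roleA P₀ c d} : Multiset Assertion)⟩ : Ontology) n).r P₀ _ _) ih)
    · exact CanElem.noConfusion hvj
    · obtain ⟨-, -, hδ⟩ := hg.newAnon_anon hna
      rw [hg.delta_zero (stage_cm_base_inv T P₀ c d n)] at hδ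
      exact absurd hδ (lt_irrefl 0)

/-- X3: an element created as an inverse-`Q`-child never has an own `Q`-child. -/
lemma X3 (i : ℕ) (w : CanElem) (Q : AtomicRole) (j : ℕ) :
    (canStage (⟨T, ({Assertion.roleA P₀ c d} : Multiset Assertion)⟩ : Ontology) i).r Q (CanElem.anon w (Role.inv Q) j)
      (CanElem.anon (CanElem.anon w (Role.inv Q) j) (Role.atomic Q) 0) = 0 := by
  set u := CanElem.anon w (Role.inv Q) j with hu
  induction i with
  | zero => rfl
  | succ n ih =>
    by_contra h
    have hg := good T P₀ c d n
    rcases step_roleMult_ne (R := Role.atomic Q) h with ⟨hua, hva, he⟩ |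
      ⟨⟨j', hvj, hna⟩, _⟩ | ⟨⟨j', huj, hna⟩, _⟩
    · exact h (Eq.trans (he : _ = (canStage (⟨T, ({Assertion.roleA P₀ c d} : Multiset Assertion)⟩ : Ontology) n).r Q _ _) ih)
    · obtain ⟨-, hpa, hδ⟩ := hg.newAnon_anon hna
      have hedge := (hg.parent w (Role.inv Q) j hpa).2
      have hcm : 1 ≤ (canStage (⟨T, ({Assertion.roleA P₀ c d} : Multiset Assertion)⟩ : Ontology) n).toInterp.conceptMult
          (DLConcept.ex (Role.atomic Q)) u :=
        le_trans hedge (le_bagSum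
          (fun v => (canStage (⟨T, ({Assertion.roleA P₀ c d} : Multiset Assertion)⟩ : Ontology) n).toInterp.roleMult (Role.atomic Q) u v) w)
      rw [hg.delta_zero hcm] at hδ
      exact absurd hδ (lt_irrefl 0)
    · exact absurd huj (ne_anon_anon u _ _ _ _)

/-- X4: a `Q`-child `v` of `u₁` never has an own inverse-`Q`-child pointing back. -/
lemma X4 (i : ℕ) (u₁ : CanElem) (Q : AtomicRole) :
    (canStage (⟨T, ({Assertion.roleA P₀ c d} : Multiset Assertion)⟩ : Ontology) i).r Q
      (CanElem.anon (CanElem.anon u₁ (Role.atomic Q) 0) (Role.inv Q) 0)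
      (CanElem.anon u₁ (Role.atomic Q) 0) = 0 := by
  set v := CanElem.anon u₁ (Role.atomic Q) 0 with hv
  induction i with
  | zero => rfl
  | succ n ih =>
    by_contra h
    have hg := good T P₀ c d n
    rcases step_roleMult_ne (R := Role.atomic Q) h with ⟨hua, hva, he⟩ |
      ⟨⟨j', hvj, hna⟩, _⟩ | ⟨⟨j', huj, hna⟩, _⟩
    · exact h (Eq.trans (he : _ = (canStage (⟨T, ({Assertion.roleA P₀ c d} : Multiset Assertion)⟩ : Ontology) n).r Q _ _) ih)
    · -- v = anon (anon v (inv Q) 0) (atomic Q) j' : impossible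
      rw [hv] at hvj
      injection hvj with h1 h2 h3
      exact absurd h1 (ne_anon_anon u₁ _ _ _ _)
    · obtain ⟨-, hpa, hδ⟩ := hg.newAnon_anon hna
      have hedge := (hg.parent u₁ (Role.atomic Q) 0 hpa).2
      have hcm : 1 ≤ (canStage (⟨T, ({Assertion.roleA P₀ c d} : Multiset Assertion)⟩ : Ontology) n).toInterp.conceptMult
          (DLConcept.ex (Role.inv Q)) v :=
        le_trans hedge (le_bagSum
          (fun w => (canStage (⟨T, ({Assertion.roleA P₀ c d} : Multiset Assertion)⟩ : Ontology) n).toInterp.roleMult (Role.inv Q) v w) u₁)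
      rw [hg.delta_zero hcm] at hδ
      exact absurd hδ (lt_irrefl 0)

end Exclusions


section CanLift

variable (T : TBox) (P₀ : AtomicRole) (c d : Ind)

local notation "KK" => (Ontology.mk T ({Assertion.roleA P₀ c d} : Multiset Assertion))

lemma canInterp_r_eq (Q : AtomicRole) (u v : CanElem) :
    (canInterp KK).rI Q u v = ⨆ i, (canStage KK i).r Q u v := rfl

lemma exists_stage_of_rI_ne {Q : AtomicRole} {u v : CanElem}
    (h : (canInterp KK).rI Q u v ≠ 0) :
    ∃ i, (canStage KK i).r Q u v ≠ 0 := by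
  by_contra hall
  push_neg at hall
  exact h (le_antisymm (iSup_le (fun i => le_of_eq (hall i))) (zero_le))

lemma canInterp_shape {Q : AtomicRole} {u v : CanElem}
    (h : (canInterp KK).rI Q u v ≠ 0) :
    (u = CanElem.ind c ∧ v = CanElem.ind d ∧ Q = P₀) ∨
    v = CanElem.anon u (Role.atomic Q) 0 ∨ u = CanElem.anon v (Role.inv Q) 0 := by
  obtain ⟨i, hi⟩ := exists_stage_of_rI_ne T P₀ c d h
  exact (good T P₀ c d i).shape Q u v hi

lemma canInterp_X1 (j : ℕ) :
    (canInterp KK).rI P₀ (CanElem.ind c) (CanElem.anon (CanElem.ind c) (Role.atomic P₀) j) = 0 :=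
  le_antisymm (iSup_le (fun i => le_of_eq (X1 T P₀ c d i j))) (zero_le)

lemma canInterp_X2 (j : ℕ) :
    (canInterp KK).rI P₀ (CanElem.anon (CanElem.ind d) (Role.inv P₀) j) (CanElem.ind d) = 0 :=
  le_antisymm (iSup_le (fun i => le_of_eq (X2 T P₀ c d i j))) (zero_le)

lemma canInterp_X3 (w : CanElem) (Q : AtomicRole) (j : ℕ) :
    (canInterp KK).rI Q (CanElem.anon w (Role.inv Q) j)
      (CanElem.anon (CanElem.anon w (Role.inv Q) j) (Role.atomic Q) 0) = 0 :=
  le_antisymm (iSup_le (fun i => le_of_eq (X3 T P₀ c d i w Q j))) (zero_le)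

lemma canInterp_X4 (u₁ : CanElem) (Q : AtomicRole) :
    (canInterp KK).rI Q
      (CanElem.anon (CanElem.anon u₁ (Role.atomic Q) 0) (Role.inv Q) 0)
      (CanElem.anon u₁ (Role.atomic Q) 0) = 0 :=
  le_antisymm (iSup_le (fun i => le_of_eq (X4 T P₀ c d i u₁ Q))) (zero_le)

lemma canInterp_cI_le_one (A : AtomicConcept) (u : CanElem) :
    (canInterp KK).cI A u ≤ 1 :=
  iSup_le (fun i => (good T P₀ c d i).cm_le (DLConcept.atomic A) u)

lemma canInterp_rI_le_one (Q : AtomicRole) (u v : CanElem) :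
    (canInterp KK).rI Q u v ≤ 1 :=
  iSup_le (fun i => (good T P₀ c d i).r_le_one Q u v)

lemma out_unique {Q : AtomicRole} {u v₁ v₂ : CanElem}
    (h₁ : (canInterp KK).rI Q u v₁ ≠ 0) (h₂ : (canInterp KK).rI Q u v₂ ≠ 0) :
    v₁ = v₂ := by
  have key : ∀ {w₁ w₂ : CanElem}, (canInterp KK).rI Q u w₁ ≠ 0 →
      (canInterp KK).rI Q u w₂ ≠ 0 →
      (u = CanElem.ind c ∧ w₁ = CanElem.ind d ∧ Q = P₀) →
      w₂ = CanElem.ind d := by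
    intro w₁ w₂ hw₁ hw₂ ⟨huc, hwd, hQ⟩
    rcases canInterp_shape T P₀ c d hw₂ with ⟨-, hwd₂, -⟩ | hch | hpar
    · exact hwd₂
    · exfalso
      rw [hch, huc, hQ] at hw₂
      exact hw₂ (canInterp_X1 T P₀ c d 0)
    · rw [huc] at hpar
      exact CanElem.noConfusion hpar
  rcases canInterp_shape T P₀ c d h₁ with hb₁ | hch₁ | hpar₁
  · rw [hb₁.2.1, key h₁ h₂ hb₁]
  · rcases canInterp_shape T P₀ c d h₂ with hb₂ | hch₂ | hpar₂
    · rw [key h₂ h₁ hb₂, hb₂.2.1]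
    · rw [hch₁, hch₂]
    · exfalso
      rw [hch₁] at h₁
      rw [hpar₂] at h₁
      exact h₁ (canInterp_X3 T P₀ c d v₂ Q 0)
  · rcases canInterp_shape T P₀ c d h₂ with hb₂ | hch₂ | hpar₂
    · rw [hb₂.1] at hpar₁
      exact CanElem.noConfusion hpar₁
    · exfalso
      rw [hch₂] at h₂
      rw [hpar₁] at h₂
      exact h₂ (canInterp_X3 T P₀ c d v₁ Q 0)
    · rw [hpar₁] at hpar₂
      injection hpar₂

lemma in_unique {Q : AtomicRole} {u₁ u₂ v : CanElem}
    (h₁ : (canInterp KK).rI Q u₁ v ≠ 0) (h₂ : (canInterp KK).rI Q u₂ v ≠ 0) :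
    u₁ = u₂ := by
  have key : ∀ {w₁ w₂ : CanElem}, (canInterp KK).rI Q w₁ v ≠ 0 →
      (canInterp KK).rI Q w₂ v ≠ 0 →
      (w₁ = CanElem.ind c ∧ v = CanElem.ind d ∧ Q = P₀) →
      w₂ = CanElem.ind c := by
    intro w₁ w₂ hw₁ hw₂ ⟨hwc, hvd, hQ⟩
    rcases canInterp_shape T P₀ c d hw₂ with ⟨hwc₂, -, -⟩ | hch | hpar
    · exact hwc₂
    · rw [hvd] at hch
      exact CanElem.noConfusion hch
    · exfalso
      rw [hvd, hQ] at hpar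
      rw [hpar, hvd, hQ] at hw₂
      exact hw₂ (canInterp_X2 T P₀ c d 0)
  rcases canInterp_shape T P₀ c d h₁ with hb₁ | hch₁ | hpar₁
  · rw [hb₁.1, key h₁ h₂ hb₁]
  · rcases canInterp_shape T P₀ c d h₂ with hb₂ | hch₂ | hpar₂
    · rw [key h₂ h₁ hb₂, hb₂.1]
    · rw [hch₁] at hch₂
      injection hch₂
    · exfalso
      rw [hch₁] at hpar₂ h₂
      rw [hpar₂] at h₂
      exact h₂ (canInterp_X4 T P₀ c d u₁ Q)
  · rcases canInterp_shape T P₀ c d h₂ with hb₂ | hch₂ | hpar₂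
    · exfalso
      rw [hb₂.2.1, hb₂.2.2] at hpar₁ h₁
      rw [hpar₁] at h₁
      exact h₁ (canInterp_X2 T P₀ c d 0)
    · exfalso
      rw [hch₂] at hpar₁ h₁
      rw [hpar₁] at h₁
      exact h₁ (canInterp_X4 T P₀ c d u₂ Q)
    · rw [hpar₁, hpar₂]

end CanLift


/- ### Query-side lemmas -/

lemma list_prod_le_one : ∀ {l : List ℕ∞}, (∀ x ∈ l, x ≤ 1) → l.prod ≤ 1
  | [], _ => by simp
  | x :: l, h => by
    rw [List.prod_cons]
    calc x * l.prod ≤ 1 * 1 :=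
          mul_le_mul' (h x (List.mem_cons_self))
            (list_prod_le_one (fun y hy => h y (List.mem_cons_of_mem x hy)))
      _ = 1 := one_mul 1

lemma list_prod_ne_zero {l : List ℕ∞} (h : l.prod ≠ 0) : ∀ x ∈ l, x ≠ 0 := by
  intro x hx h0
  exact h (List.prod_eq_zero (h0 ▸ hx))

lemma mem_termsOfList {t : Term} : ∀ {l : List QAtom},
    (t ∈ termsOfList l ↔ ∃ atm ∈ l, t ∈ QAtom.terms atm)
  | [] => by simp [termsOfList]
  | a :: l => by
    have hh : termsOfList (a :: l) = QAtom.terms a ++ termsOfList l := rfl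
    rw [hh, List.mem_append, mem_termsOfList]
    simp

lemma mem_subVars {q : CQ} {z' : Finset Var} {v : Var} :
    v ∈ subVars q z' ↔ ∃ atm ∈ q.subAtoms z', v ∈ QAtom.vars atm := by
  unfold subVars
  generalize q.subAtoms z' = l
  induction l with
  | nil => simp
  | cons a l ih =>
    have hh : List.foldr (fun atm acc => QAtom.vars atm ++ acc) [] (a :: l) =
        QAtom.vars a ++ List.foldr (fun atm acc => QAtom.vars atm ++ acc) [] l := rfl
    rw [hh, List.mem_append, ih]
    simp

lemma mem_subAtoms {q : CQ} {z' : Finset Var} {atm : QAtom} :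
    atm ∈ q.subAtoms z' ↔ atm ∈ q.atoms ∧ ∃ v ∈ z', v ∈ QAtom.vars atm := by
  unfold CQ.subAtoms
  rw [List.mem_filter]
  simp

lemma mem_tTerms {q : CQ} {z z' : Finset Var} {t : Term} :
    t ∈ q.tTerms z z' ↔ (∃ atm ∈ q.subAtoms z', t ∈ QAtom.terms atm) ∧
      ¬ Term.IsZVar t z := by
  unfold CQ.tTerms
  rw [List.mem_filter, mem_termsOfList]
  simp

lemma varsOf_eq {t : Term} {v : Var} (h : v ∈ Term.varsOf t) : t = Term.var v := by
  cases t with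
  | var w => simp [Term.varsOf] at h; rw [h]
  | ind a => simp [Term.varsOf] at h

lemma var_mem_terms {atm : QAtom} {v : Var} (h : v ∈ QAtom.vars atm) :
    Term.var v ∈ QAtom.terms atm := by
  cases atm with
  | conceptAt A t =>
      rw [varsOf_eq h]
      simp [QAtom.terms]
  | roleAt P t₁ t₂ =>
      rcases List.mem_append.1 h with h | h
      · rw [varsOf_eq h]; simp [QAtom.terms]
      · rw [varsOf_eq h]; simp [QAtom.terms]
  | eqAt w t =>
      rcases List.mem_cons.1 h with h | h
      · rw [h]; simp [QAtom.terms]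
      · rw [varsOf_eq h]; simp [QAtom.terms]

lemma term_var_mem_vars {atm : QAtom} {v : Var} (h : Term.var v ∈ QAtom.terms atm) :
    v ∈ QAtom.vars atm := by
  cases atm with
  | conceptAt A t =>
      simp [QAtom.terms] at h
      rw [← h]
      simp [QAtom.vars, Term.varsOf]
  | roleAt P t₁ t₂ =>
      simp [QAtom.terms] at h
      rcases h with h | h <;>
        · rw [← h]
          simp [QAtom.vars, Term.varsOf]
  | eqAt w t =>
      simp [QAtom.terms] at h
      rcases h with h | h
      · simp [QAtom.vars]
        left
        exact h
      · rw [← h]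
        simp [QAtom.vars, Term.varsOf]

lemma mem_z'_of_mem_z {q : CQ} {z z' : Finset Var} (hma : q.MAConnected z z')
    {v : Var} {atm : QAtom} (hmem : atm ∈ q.subAtoms z')
    (hvv : v ∈ QAtom.vars atm) (hvz : v ∈ z) : v ∈ z' := by
  obtain ⟨hat, w, hw, hwv⟩ := mem_subAtoms.1 hmem
  have hadj : q.zAdj z (Term.var w) (Term.var v) :=
    ⟨⟨atm, hat, var_mem_terms hwv, var_mem_terms hvv⟩,
     ⟨w, hma.1 hw, rfl⟩, ⟨v, hvz, rfl⟩⟩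
  exact hma.2.1 w hw v hvz (Relation.ReflTransGen.single hadj)

/-- One propagation step along an atom with positive multiplicity. -/
lemma step_eq {I : BagInterp}
    (hout : ∀ (Q : AtomicRole) (u v₁ v₂ : I.Δ), I.rI Q u v₁ ≠ 0 → I.rI Q u v₂ ≠ 0 → v₁ = v₂)
    (hin : ∀ (Q : AtomicRole) (u₁ u₂ v : I.Δ), I.rI Q u₁ v ≠ 0 → I.rI Q u₂ v ≠ 0 → u₁ = u₂)
    (f g : Var → I.Δ) {atm : QAtom}
    (hf : QAtom.mult I f atm ≠ 0) (hg : QAtom.mult I g atm ≠ 0)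
    {w₁ w₂ : Var} (ht1 : Term.var w₁ ∈ QAtom.terms atm)
    (ht2 : Term.var w₂ ∈ QAtom.terms atm)
    (hw1 : f w₁ = g w₁) : f w₂ = g w₂ := by
  cases atm with
  | conceptAt A t =>
      simp [QAtom.terms] at ht1 ht2
      have : w₂ = w₁ := by
        rw [← ht2] at ht1
        exact (Term.var.inj ht1).symm
      rw [this]; exact hw1
  | roleAt P t₁ t₂ =>
      have hfm : I.rI P (termVal I f t₁) (termVal I f t₂) ≠ 0 := hf
      have hgm : I.rI P (termVal I g t₁) (termVal I g t₂) ≠ 0 := hg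
      simp [QAtom.terms] at ht1 ht2
      rcases ht1 with h1 | h1 <;> rcases ht2 with h2 | h2
      · rw [← h2] at h1
        have : w₂ = w₁ := (Term.var.inj h1).symm
        rw [this]; exact hw1
      · -- t₁ = var w₁, t₂ = var w₂
        rw [← h1, ← h2] at hfm hgm
        have hfm' : I.rI P (f w₁) (f w₂) ≠ 0 := hfm
        have hgm' : I.rI P (f w₁) (g w₂) ≠ 0 := by rw [hw1]; exact hgm
        exact hout P (f w₁) (f w₂) (g w₂) hfm' hgm'
      · -- t₁ = var w₂, t₂ = var w₁
        rw [← h2, ← h1] at hfm hgm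
        have hfm' : I.rI P (f w₂) (f w₁) ≠ 0 := hfm
        have hgm0 : I.rI P (g w₂) (g w₁) ≠ 0 := hgm
        have hgm' : I.rI P (g w₂) (f w₁) ≠ 0 := by rw [hw1]; exact hgm0
        exact hin P (f w₂) (g w₂) (f w₁) hfm' hgm'
      · rw [← h2] at h1
        have : w₂ = w₁ := (Term.var.inj h1).symm
        rw [this]; exact hw1
  | eqAt v t =>
      have hfm : f v = termVal I f t := by
        by_contra hc
        exact hf (if_neg hc)
      have hgm : g v = termVal I g t := by
        by_contra hc
        exact hg (if_neg hc)
      simp [QAtom.terms] at ht1 ht2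
      rcases ht1 with h1 | h1 <;> rcases ht2 with h2 | h2
      · have e1 : w₁ = v := h1
        have e2 : w₂ = v := h2
        rw [e2, ← e1]; exact hw1
      · -- w₁ = v, t = var w₂
        have e1 : w₁ = v := h1
        have e2 : f w₂ = f v := by rw [← h2] at hfm; exact hfm.symm
        have e3 : g w₂ = g v := by rw [← h2] at hgm; exact hgm.symm
        rw [e2, e3, ← e1]; exact hw1
      · -- t = var w₁, w₂ = v
        have e2 : w₂ = v := h2
        have e1f : f v = f w₁ := by rw [← h1] at hfm; exact hfm
        have e1g : g v = g w₁ := by rw [← h1] at hgm; exact hgm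
        rw [e2, e1f, e1g]; exact hw1
      · rw [← h2] at h1
        have : w₂ = w₁ := (Term.var.inj h1).symm
        rw [this]; exact hw1

/-- Propagation of agreement of two contributing valuations along the
connected anonymous part. -/
lemma propagate {I : BagInterp} {q : CQ} {z z' : Finset Var}
    (hout : ∀ (Q : AtomicRole) (u v₁ v₂ : I.Δ), I.rI Q u v₁ ≠ 0 → I.rI Q u v₂ ≠ 0 → v₁ = v₂)
    (hin : ∀ (Q : AtomicRole) (u₁ u₂ v : I.Δ), I.rI Q u₁ v ≠ 0 → I.rI Q u₂ v ≠ 0 → u₁ = u₂)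
    (hma : q.MAConnected z z') (f g : Var → I.Δ)
    (hf : ∀ atm ∈ q.subAtoms z', QAtom.mult I f atm ≠ 0)
    (hg : ∀ atm ∈ q.subAtoms z', QAtom.mult I g atm ≠ 0)
    {v₀ : Var} (hv₀ : v₀ ∈ z') (hbase : f v₀ = g v₀)
    {w : Var} (hw : w ∈ z') : f w = g w := by
  have hpath := hma.2.2 v₀ hv₀ w hw
  have main : ∀ t, Relation.ReflTransGen (q.zAdj z) (Term.var v₀) t →
      ∀ w', t = Term.var w' → w' ∈ z' → f w' = g w' := by
    intro t hrtg
    induction hrtg with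
    | refl =>
        intro w' ht _
        have : v₀ = w' := Term.var.inj ht
        rw [← this]; exact hbase
    | @tail b tt hab hlast ih =>
        intro w' ht hw'
        obtain ⟨hadj, hz1, hz2⟩ := hlast
        obtain ⟨w₁, hw₁z, hbw⟩ := hz1
        obtain ⟨atm, hatm, htb, htc⟩ := hadj
        have hw₁' : w₁ ∈ z' := hma.2.1 v₀ hv₀ w₁ hw₁z (hbw ▸ hab)
        have hfw₁ : f w₁ = g w₁ := ih w₁ hbw hw₁'
        have hmem : atm ∈ q.subAtoms z' :=
          mem_subAtoms.2 ⟨hatm, w₁, hw₁', term_var_mem_vars (hbw ▸ htb)⟩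
        exact step_eq hout hin f g (hf atm hmem) (hg atm hmem)
          (hbw ▸ htb) (ht ▸ htc) hfw₁
  exact main _ hpath w rfl hw


/-- The main upper bound: under neighbour-uniqueness and boundedness of the
canonical model and determination of the alpha variable, the answer is ≤ 1. -/
lemma key_le (T : TBox) (q : CQ) (z z' : Finset Var) (atm : QAtom)
    (hma : q.MAConnected z z')
    (hout : ∀ (Q : AtomicRole) (u v₁ v₂ : CanElem),
      (canInterp ⟨T, alphaABox z' atm (freshA q z z') (freshB q)⟩).rI Q u v₁ ≠ 0 →
      (canInterp ⟨T, alphaABox z' atm (freshA q z z') (freshB q)⟩).rI Q u v₂ ≠ 0 → v₁ = v₂)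
    (hin : ∀ (Q : AtomicRole) (u₁ u₂ v : CanElem),
      (canInterp ⟨T, alphaABox z' atm (freshA q z z') (freshB q)⟩).rI Q u₁ v ≠ 0 →
      (canInterp ⟨T, alphaABox z' atm (freshA q z z') (freshB q)⟩).rI Q u₂ v ≠ 0 → u₁ = u₂)
    (hcle : ∀ (A : AtomicConcept) (u : CanElem),
      (canInterp ⟨T, alphaABox z' atm (freshA q z z') (freshB q)⟩).cI A u ≤ 1)
    (hrle : ∀ (Q : AtomicRole) (u v : CanElem),
      (canInterp ⟨T, alphaABox z' atm (freshA q z z') (freshB q)⟩).rI Q u v ≤ 1)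
    (v₀ : Var) (hv₀ : v₀ ∈ z')
    (hbase : ∀ f g : Var → CanElem,
      (∀ t ∈ q.tTerms z z',
        termVal (canInterp ⟨T, alphaABox z' atm (freshA q z z') (freshB q)⟩) f t
          = CanElem.ind (freshA q z z')) →
      (∀ t ∈ q.tTerms z z',
        termVal (canInterp ⟨T, alphaABox z' atm (freshA q z z') (freshB q)⟩) g t
          = CanElem.ind (freshA q z z')) →
      (∀ atm' ∈ q.subAtoms z',
        QAtom.mult (canInterp ⟨T, alphaABox z' atm (freshA q z z') (freshB q)⟩) f atm' ≠ 0) →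
      (∀ atm' ∈ q.subAtoms z',
        QAtom.mult (canInterp ⟨T, alphaABox z' atm (freshA q z z') (freshB q)⟩) g atm' ≠ 0) →
      f v₀ = g v₀) :
    realQAnswer T q z z' atm ≤ 1 := by
  unfold realQAnswer
  refine bagSum_le_one ?_ ?_
  · rintro ⟨f, hjf, htf, hnf⟩
    refine list_prod_le_one (fun x hx => ?_)
    obtain ⟨atm', hmem', rfl⟩ := List.mem_map.1 hx
    cases atm' with
    | conceptAt A t => exact hcle A _
    | roleAt P' t₁ t₂ => exact hrle P' _ _
    | eqAt v t =>
        simp only [QAtom.mult]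
        split
        · exact le_refl 1
        · exact zero_le
  · rintro ⟨f, hjf, htf, hnf⟩ ⟨g, hjg, htg, hng⟩ hFf hFg
    have hf : ∀ atm' ∈ q.subAtoms z',
        QAtom.mult (canInterp ⟨T, alphaABox z' atm (freshA q z z') (freshB q)⟩) f atm' ≠ 0 :=
      fun atm' hmem' => list_prod_ne_zero hFf _ (List.mem_map_of_mem hmem')
    have hg : ∀ atm' ∈ q.subAtoms z',
        QAtom.mult (canInterp ⟨T, alphaABox z' atm (freshA q z z') (freshB q)⟩) g atm' ≠ 0 :=
      fun atm' hmem' => list_prod_ne_zero hFg _ (List.mem_map_of_mem hmem')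
    have hbase' : f v₀ = g v₀ := hbase f g htf htg hf hg
    apply Subtype.ext
    funext v
    show f v = g v
    by_cases hsv : v ∈ subVars q z'
    · obtain ⟨atm', hmem', hvv⟩ := mem_subVars.1 hsv
      by_cases hvz : v ∈ z
      · have hv' : v ∈ z' := mem_z'_of_mem_z hma hmem' hvv hvz
        exact propagate (I := canInterp ⟨T, alphaABox z' atm (freshA q z z') (freshB q)⟩)
          hout hin hma f g hf hg hv₀ hbase' hv'
      · have hnzv : ¬ Term.IsZVar (Term.var v) z := by
          rintro ⟨w, hw, hweq⟩
          exact hvz ((Term.var.inj hweq) ▸ hw)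
        have htm : Term.var v ∈ q.tTerms z z' :=
          mem_tTerms.2 ⟨⟨atm', hmem', var_mem_terms hvv⟩, hnzv⟩
        have h1 : f v = CanElem.ind (freshA q z z') := htf _ htm
        have h2 : g v = CanElem.ind (freshA q z z') := htg _ htm
        rw [h1, h2]
    · rw [hjf v hsv, hjg v hsv]

end S19

/-- Let `q(x) = ∃y. φ(x,y)` be a rooted CQ, `K = ⟨T,A⟩` a
DL-Lite_core^bag ontology, `z ⊆ y` an equality-consistent subset, and `z'` a
nonempty ma-connected subset of `z` that is realisable by `T` (w.r.t. the
chosen atom `α_{z'}`).  Then `(q^a_{z'})^{C(⟨T,A'⟩)}(⟨⟩) = 1`: the Boolean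
query `q^a_{z'}` has exactly one contributing valuation over the corresponding
one-assertion canonical model. -/
theorem statement_19 (K : Ontology) (hcore : TBox.IsCore K.tbox)
    (q : CQ) (hwf : q.WellFormed) (hr : q.Rooted)
    (z : Finset Var) (hz : z ⊆ q.existVars.toFinset)
    (hec : EqConsistent q z)
    (z' : Finset Var) (hma : q.MAConnected z z') (hne : z'.Nonempty)
    (atm : QAtom) (halpha : IsAlphaFor q z z' atm)
    (hreal : RealisableMA K.tbox q z z' atm) :
    realQAnswer K.tbox q z z' atm = 1 := by
  refine le_antisymm ?_ hreal
  obtain ⟨hαmem, hcase⟩ := halpha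
  rcases hcase with ⟨P, tt, v₀, hv₀, htz, hatmeq⟩ | ⟨P, tt, v₀, hv₀, htz, hatmeq⟩
  · -- `atm = P(t, z)` : the ABox is `{P(a,b)}`
    have hAB : alphaABox z' atm (freshA q z z') (freshB q)
        = ({Assertion.roleA P (freshA q z z') (freshB q)} : Multiset Assertion) := by
      rw [hatmeq]
      show (if Term.IsZVar (Term.var v₀) z'
          then ({Assertion.roleA P (freshA q z z') (freshB q)} : Multiset Assertion)
          else {Assertion.roleA P (freshB q) (freshA q z z')}) = _
      rw [if_pos ⟨v₀, hv₀, rfl⟩]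
    have hO : (⟨K.tbox, alphaABox z' atm (freshA q z z') (freshB q)⟩ : Ontology)
        = ⟨K.tbox, ({Assertion.roleA P (freshA q z z') (freshB q)} : Multiset Assertion)⟩ := by
      rw [hAB]
    have hout : ∀ (Q : AtomicRole) (u v₁ v₂ : CanElem),
        (canInterp ⟨K.tbox, alphaABox z' atm (freshA q z z') (freshB q)⟩).rI Q u v₁ ≠ 0 →
        (canInterp ⟨K.tbox, alphaABox z' atm (freshA q z z') (freshB q)⟩).rI Q u v₂ ≠ 0 →
        v₁ = v₂ := by
      rw [hO]
      exact fun Q u v₁ v₂ h1 h2 => S19.out_unique K.tbox P _ _ h1 h2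
    have hin : ∀ (Q : AtomicRole) (u₁ u₂ v : CanElem),
        (canInterp ⟨K.tbox, alphaABox z' atm (freshA q z z') (freshB q)⟩).rI Q u₁ v ≠ 0 →
        (canInterp ⟨K.tbox, alphaABox z' atm (freshA q z z') (freshB q)⟩).rI Q u₂ v ≠ 0 →
        u₁ = u₂ := by
      rw [hO]
      exact fun Q u₁ u₂ v h1 h2 => S19.in_unique K.tbox P _ _ h1 h2
    have hcle : ∀ (A : AtomicConcept) (u : CanElem),
        (canInterp ⟨K.tbox, alphaABox z' atm (freshA q z z') (freshB q)⟩).cI A u ≤ 1 := by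
      rw [hO]
      exact S19.canInterp_cI_le_one K.tbox P _ _
    have hrle : ∀ (Q : AtomicRole) (u v : CanElem),
        (canInterp ⟨K.tbox, alphaABox z' atm (freshA q z z') (freshB q)⟩).rI Q u v ≤ 1 := by
      rw [hO]
      exact S19.canInterp_rI_le_one K.tbox P _ _
    refine S19.key_le K.tbox q z z' atm hma hout hin hcle hrle v₀ hv₀ ?_
    intro f g htf htg hf hg
    have httm : tt ∈ q.tTerms z z' :=
      S19.mem_tTerms.2 ⟨⟨atm, hαmem, by rw [hatmeq]; exact List.mem_cons_self⟩, htz⟩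
    have hαf : QAtom.mult (canInterp ⟨K.tbox, alphaABox z' atm (freshA q z z') (freshB q)⟩)
        f (QAtom.roleAt P tt (Term.var v₀)) ≠ 0 := by
      rw [← hatmeq]; exact hf atm hαmem
    have hαg : QAtom.mult (canInterp ⟨K.tbox, alphaABox z' atm (freshA q z z') (freshB q)⟩)
        g (QAtom.roleAt P tt (Term.var v₀)) ≠ 0 := by
      rw [← hatmeq]; exact hg atm hαmem
    have hαf' : (canInterp ⟨K.tbox, alphaABox z' atm (freshA q z z') (freshB q)⟩).rI P
        (CanElem.ind (freshA q z z')) (f v₀) ≠ 0 := by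
      have heq : QAtom.mult (canInterp ⟨K.tbox, alphaABox z' atm (freshA q z z') (freshB q)⟩)
          f (QAtom.roleAt P tt (Term.var v₀)) =
          (canInterp ⟨K.tbox, alphaABox z' atm (freshA q z z') (freshB q)⟩).rI P
            (termVal (canInterp ⟨K.tbox, alphaABox z' atm (freshA q z z') (freshB q)⟩) f tt)
            (f v₀) := rfl
      rw [heq, htf tt httm] at hαf
      exact hαf
    have hαg' : (canInterp ⟨K.tbox, alphaABox z' atm (freshA q z z') (freshB q)⟩).rI P
        (CanElem.ind (freshA q z z')) (g v₀) ≠ 0 := by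
      have heq : QAtom.mult (canInterp ⟨K.tbox, alphaABox z' atm (freshA q z z') (freshB q)⟩)
          g (QAtom.roleAt P tt (Term.var v₀)) =
          (canInterp ⟨K.tbox, alphaABox z' atm (freshA q z z') (freshB q)⟩).rI P
            (termVal (canInterp ⟨K.tbox, alphaABox z' atm (freshA q z z') (freshB q)⟩) g tt)
            (g v₀) := rfl
      rw [heq, htg tt httm] at hαg
      exact hαg
    exact hout P _ _ _ hαf' hαg'
  · -- `atm = P(z, t)` : the ABox is `{P(b,a)}`
    have hAB : alphaABox z' atm (freshA q z z') (freshB q)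
        = ({Assertion.roleA P (freshB q) (freshA q z z')} : Multiset Assertion) := by
      rw [hatmeq]
      show (if Term.IsZVar tt z'
          then ({Assertion.roleA P (freshA q z z') (freshB q)} : Multiset Assertion)
          else {Assertion.roleA P (freshB q) (freshA q z z')}) = _
      rw [if_neg (fun hcon => htz ⟨hcon.choose, hma.1 hcon.choose_spec.1, hcon.choose_spec.2⟩)]
    have hO : (⟨K.tbox, alphaABox z' atm (freshA q z z') (freshB q)⟩ : Ontology)
        = ⟨K.tbox, ({Assertion.roleA P (freshB q) (freshA q z z')} : Multiset Assertion)⟩ := by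
      rw [hAB]
    have hout : ∀ (Q : AtomicRole) (u v₁ v₂ : CanElem),
        (canInterp ⟨K.tbox, alphaABox z' atm (freshA q z z') (freshB q)⟩).rI Q u v₁ ≠ 0 →
        (canInterp ⟨K.tbox, alphaABox z' atm (freshA q z z') (freshB q)⟩).rI Q u v₂ ≠ 0 →
        v₁ = v₂ := by
      rw [hO]
      exact fun Q u v₁ v₂ h1 h2 => S19.out_unique K.tbox P _ _ h1 h2
    have hin : ∀ (Q : AtomicRole) (u₁ u₂ v : CanElem),
        (canInterp ⟨K.tbox, alphaABox z' atm (freshA q z z') (freshB q)⟩).rI Q u₁ v ≠ 0 →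
        (canInterp ⟨K.tbox, alphaABox z' atm (freshA q z z') (freshB q)⟩).rI Q u₂ v ≠ 0 →
        u₁ = u₂ := by
      rw [hO]
      exact fun Q u₁ u₂ v h1 h2 => S19.in_unique K.tbox P _ _ h1 h2
    have hcle : ∀ (A : AtomicConcept) (u : CanElem),
        (canInterp ⟨K.tbox, alphaABox z' atm (freshA q z z') (freshB q)⟩).cI A u ≤ 1 := by
      rw [hO]
      exact S19.canInterp_cI_le_one K.tbox P _ _
    have hrle : ∀ (Q : AtomicRole) (u v : CanElem),
        (canInterp ⟨K.tbox, alphaABox z' atm (freshA q z z') (freshB q)⟩).rI Q u v ≤ 1 := by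
      rw [hO]
      exact S19.canInterp_rI_le_one K.tbox P _ _
    refine S19.key_le K.tbox q z z' atm hma hout hin hcle hrle v₀ hv₀ ?_
    intro f g htf htg hf hg
    have httm : tt ∈ q.tTerms z z' :=
      S19.mem_tTerms.2 ⟨⟨atm, hαmem, by
        rw [hatmeq]; exact List.mem_cons_of_mem _ (List.mem_cons_self)⟩, htz⟩
    have hαf : QAtom.mult (canInterp ⟨K.tbox, alphaABox z' atm (freshA q z z') (freshB q)⟩)
        f (QAtom.roleAt P (Term.var v₀) tt) ≠ 0 := by
      rw [← hatmeq]; exact hf atm hαmem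
    have hαg : QAtom.mult (canInterp ⟨K.tbox, alphaABox z' atm (freshA q z z') (freshB q)⟩)
        g (QAtom.roleAt P (Term.var v₀) tt) ≠ 0 := by
      rw [← hatmeq]; exact hg atm hαmem
    have hαf' : (canInterp ⟨K.tbox, alphaABox z' atm (freshA q z z') (freshB q)⟩).rI P
        (f v₀) (CanElem.ind (freshA q z z')) ≠ 0 := by
      have heq : QAtom.mult (canInterp ⟨K.tbox, alphaABox z' atm (freshA q z z') (freshB q)⟩)
          f (QAtom.roleAt P (Term.var v₀) tt) =
          (canInterp ⟨K.tbox, alphaABox z' atm (freshA q z z') (freshB q)⟩).rI P (f v₀)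
            (termVal (canInterp ⟨K.tbox, alphaABox z' atm (freshA q z z') (freshB q)⟩) f tt)
          := rfl
      rw [heq, htf tt httm] at hαf
      exact hαf
    have hαg' : (canInterp ⟨K.tbox, alphaABox z' atm (freshA q z z') (freshB q)⟩).rI P
        (g v₀) (CanElem.ind (freshA q z z')) ≠ 0 := by
      have heq : QAtom.mult (canInterp ⟨K.tbox, alphaABox z' atm (freshA q z z') (freshB q)⟩)
          g (QAtom.roleAt P (Term.var v₀) tt) =
          (canInterp ⟨K.tbox, alphaABox z' atm (freshA q z z') (freshB q)⟩).rI P (g v₀)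
            (termVal (canInterp ⟨K.tbox, alphaABox z' atm (freshA q z z') (freshB q)⟩) g tt)
          := rfl
      rw [heq, htg tt httm] at hαg
      exact hαg
    exact hin P _ _ _ hαf' hαg'
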